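/- arXiv:gr-qc/0301073 — 3 statements merged into one kernel-verified Lean document; each statement's English description precedes it below -/
import Mathlib

section
/- Let n ≥ 1 and s ∈ ℝ. For every C¹ vector field Y on ℝⁿ with compact support contained in ℝⁿ ∖ {0}, one has ∫ r^{−2s−n+2} Σᵢ,ⱼ (S(Y)ᵢⱼ + (1/2)(div Y)δᵢⱼ) Yᵢ (xⱼ/r²) dx = (1/2) ∫ r^{−2s−n} [ (s−1)|Y|² + (2s+n)⟨x̂, Y⟩² ] dx, where r = ‖x‖ and x̂ = x/‖x‖. -/
open MeasureTheory Real

/-- The `i`-th partial derivative of a function on `ℝⁿ`. -/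
noncomputable def pd (n : ℕ) (f : EuclideanSpace ℝ (Fin n) → ℝ)
    (i : Fin n) (x : EuclideanSpace ℝ (Fin n)) : ℝ :=
  fderiv ℝ f x (EuclideanSpace.single i 1)

/-- The squared Euclidean norm of the gradient, `|∇f|² = Σᵢ (∂ᵢf)²`. -/
noncomputable def gradSq (n : ℕ) (f : EuclideanSpace ℝ (Fin n) → ℝ)
    (x : EuclideanSpace ℝ (Fin n)) : ℝ :=
  ∑ i, (pd n f i x) ^ 2

/-- The Euclidean Laplacian, `Δf = Σᵢ ∂ᵢ²f`. -/
noncomputable def lap (n : ℕ) (f : EuclideanSpace ℝ (Fin n) → ℝ)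
    (x : EuclideanSpace ℝ (Fin n)) : ℝ :=
  ∑ i, pd n (pd n f i) i x

/-- The partial derivative `∂ᵢYⱼ` of a vector field `Y` on `ℝⁿ`. -/
noncomputable def vpd (n : ℕ)
    (Y : EuclideanSpace ℝ (Fin n) → EuclideanSpace ℝ (Fin n))
    (i j : Fin n) (x : EuclideanSpace ℝ (Fin n)) : ℝ :=
  fderiv ℝ (fun y => Y y j) x (EuclideanSpace.single i 1)

/-- The symmetrized gradient `S(Y)ᵢⱼ = (∂ᵢYⱼ + ∂ⱼYᵢ)/2` of a vector field. -/
noncomputable def symGrad (n : ℕ)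
    (Y : EuclideanSpace ℝ (Fin n) → EuclideanSpace ℝ (Fin n))
    (i j : Fin n) (x : EuclideanSpace ℝ (Fin n)) : ℝ :=
  (vpd n Y i j x + vpd n Y j i x) / 2

/-- The divergence `div Y = Σᵢ ∂ᵢYᵢ` of a vector field on `ℝⁿ`. -/
noncomputable def diverg (n : ℕ)
    (Y : EuclideanSpace ℝ (Fin n) → EuclideanSpace ℝ (Fin n))
    (x : EuclideanSpace ℝ (Fin n)) : ℝ :=
  ∑ i, vpd n Y i i x

namespace RK
variable {n : ℕ}

noncomputable def NN (x : EuclideanSpace ℝ (Fin n)) : ℝ := ∑ i, x i * x i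

lemma NN_nonneg (x : EuclideanSpace ℝ (Fin n)) : 0 ≤ NN x :=
  Finset.sum_nonneg fun _ _ => mul_self_nonneg _

lemma norm_eq_sqrt_NN (x : EuclideanSpace ℝ (Fin n)) : ‖x‖ = Real.sqrt (NN x) := by
  rw [EuclideanSpace.norm_eq]
  congr 1
  exact Finset.sum_congr rfl fun i _ => by rw [Real.norm_eq_abs, sq_abs, sq]

lemma rpow_norm (x : EuclideanSpace ℝ (Fin n)) (p : ℝ) : ‖x‖ ^ p = NN x ^ (p / 2) := by
  rw [norm_eq_sqrt_NN, Real.sqrt_eq_rpow, ← Real.rpow_mul (NN_nonneg x)]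
  ring_nf

lemma NN_eq_norm_sq (x : EuclideanSpace ℝ (Fin n)) : NN x = ‖x‖ ^ 2 := by
  rw [norm_eq_sqrt_NN, Real.sq_sqrt (NN_nonneg x)]

lemma NN_pos {x : EuclideanSpace ℝ (Fin n)} (hx : x ≠ 0) : 0 < NN x := by
  rw [NN_eq_norm_sq]
  have : 0 < ‖x‖ := norm_pos_iff.mpr hx
  positivity

noncomputable def gg (Y : EuclideanSpace ℝ (Fin n) → EuclideanSpace ℝ (Fin n))
    (x : EuclideanSpace ℝ (Fin n)) : ℝ := ∑ i, x i * Y x i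
noncomputable def qq (Y : EuclideanSpace ℝ (Fin n) → EuclideanSpace ℝ (Fin n))
    (x : EuclideanSpace ℝ (Fin n)) : ℝ := ∑ i, Y x i * Y x i
noncomputable def WW (Y : EuclideanSpace ℝ (Fin n) → EuclideanSpace ℝ (Fin n))
    (b : ℝ) (j : Fin n) (x : EuclideanSpace ℝ (Fin n)) : ℝ :=
  NN x ^ b * (2⁻¹ * gg Y x * Y x j + 4⁻¹ * x j * qq Y x)

lemma hasFDerivAt_coord (x : EuclideanSpace ℝ (Fin n)) (i : Fin n) :
    HasFDerivAt (fun y : EuclideanSpace ℝ (Fin n) => y i)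
      (EuclideanSpace.proj (𝕜 := ℝ) i) x :=
  (EuclideanSpace.proj (𝕜 := ℝ) i).hasFDerivAt

lemma contDiff_coord (i : Fin n) :
    ContDiff ℝ 1 (fun y : EuclideanSpace ℝ (Fin n) => y i) :=
  (EuclideanSpace.proj (𝕜 := ℝ) i).contDiff

lemma contDiff_NN : ContDiff ℝ 1 (NN (n := n)) :=
  ContDiff.sum fun i _ => (contDiff_coord i).mul (contDiff_coord i)

section props
variable {Y : EuclideanSpace ℝ (Fin n) → EuclideanSpace ℝ (Fin n)}

lemma apply_zero (i : Fin n) {y : EuclideanSpace ℝ (Fin n)} (hy : Y y = 0) : Y y i = 0 := by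
  rw [hy]; rfl

lemma WW_zero {b : ℝ} {j : Fin n} {y : EuclideanSpace ℝ (Fin n)} (hy : Y y = 0) :
    WW Y b j y = 0 := by
  simp [WW, gg, qq, apply_zero _ hy]

lemma WW_hasCompactSupport (hsupp : HasCompactSupport Y) (b : ℝ) (j : Fin n) :
    HasCompactSupport (WW Y b j) := by
  apply hsupp.mono
  intro y hy
  rw [Function.mem_support] at hy ⊢
  intro h
  exact hy (WW_zero h)

lemma WW_contDiff (hY : ContDiff ℝ 1 Y)
    (h0 : tsupport Y ⊆ {x : EuclideanSpace ℝ (Fin n) | x ≠ 0}) (b : ℝ) (j : Fin n) :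
    ContDiff ℝ 1 (WW Y b j) := by
  rw [contDiff_iff_contDiffAt]
  intro x
  by_cases hx : x ∈ tsupport Y
  · have hx0 : x ≠ 0 := h0 hx
    have hYc : ∀ i, ContDiff ℝ 1 (fun y => Y y i) := fun i => (contDiff_coord i).comp hY
    have hgg : ContDiff ℝ 1 (gg Y) :=
      ContDiff.sum fun i _ => (contDiff_coord i).mul (hYc i)
    have hqq : ContDiff ℝ 1 (qq Y) :=
      ContDiff.sum fun i _ => (hYc i).mul (hYc i)
    have h1 : ContDiffAt ℝ 1 (fun y => NN y ^ b) x :=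
      (Real.contDiffAt_rpow_const_of_ne (NN_pos hx0).ne').comp x contDiff_NN.contDiffAt
    exact h1.mul (((contDiff_const.mul hgg).mul (hYc j)).add
      ((contDiff_const.mul (contDiff_coord j)).mul hqq)).contDiffAt
  · have hev : ∀ᶠ y in nhds x, WW Y b j y = 0 := by
      filter_upwards [(isClosed_tsupport Y).isOpen_compl.mem_nhds hx] with y hy
      exact WW_zero (image_eq_zero_of_notMem_tsupport hy)
    exact contDiffAt_const.congr_of_eventuallyEq hev

end props

section deriv
variable {Y : EuclideanSpace ℝ (Fin n) → EuclideanSpace ℝ (Fin n)} (hY : ContDiff ℝ 1 Y)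
include hY

lemma hasFDerivAt_comp_proj (x : EuclideanSpace ℝ (Fin n)) (i : Fin n) :
    HasFDerivAt (fun y => Y y i)
      ((EuclideanSpace.proj (𝕜 := ℝ) i).comp (fderiv ℝ Y x)) x := by
  have h1 : HasFDerivAt Y (fderiv ℝ Y x) x := (hY.differentiable one_ne_zero x).hasFDerivAt
  exact ((EuclideanSpace.proj (𝕜 := ℝ) i).hasFDerivAt (x := Y x)).comp x h1

lemma vpd_eq (x : EuclideanSpace ℝ (Fin n)) (i j : Fin n) :
    fderiv ℝ (fun y => Y y j) x (EuclideanSpace.single i 1)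
      = fderiv ℝ Y x (EuclideanSpace.single i 1) j := by
  rw [(hasFDerivAt_comp_proj hY x j).fderiv]
  rfl

lemma fderiv_WW_apply (b : ℝ) (j : Fin n) (x : EuclideanSpace ℝ (Fin n)) (hx : x ≠ 0) :
    fderiv ℝ (WW Y b j) x (EuclideanSpace.single j 1) =
      NN x ^ b * (2⁻¹ * gg Y x * fderiv ℝ Y x (EuclideanSpace.single j 1) j
          + Y x j * (2⁻¹ * ((∑ i, x i * fderiv ℝ Y x (EuclideanSpace.single j 1) i) + Y x j))
          + (4⁻¹ * x j * ((∑ i, Y x i * fderiv ℝ Y x (EuclideanSpace.single j 1) i) * 2)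
            + qq Y x * 4⁻¹))
      + (2⁻¹ * gg Y x * Y x j + 4⁻¹ * x j * qq Y x) * (b * NN x ^ (b - 1) * (2 * x j)) := by
  set DY := fderiv ℝ Y x with hDY
  have hYc : ∀ i, HasFDerivAt (fun y => Y y i)
      ((EuclideanSpace.proj (𝕜 := ℝ) i).comp DY) x := hasFDerivAt_comp_proj hY x
  have hN : HasFDerivAt (NN (n := n))
      (∑ i, (x i • (EuclideanSpace.proj (𝕜 := ℝ) i) + x i • (EuclideanSpace.proj (𝕜 := ℝ) i)
        : EuclideanSpace ℝ (Fin n) →L[ℝ] ℝ)) x :=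
    HasFDerivAt.fun_sum fun i _ => (hasFDerivAt_coord x i).mul (hasFDerivAt_coord x i)
  have hg : HasFDerivAt (gg Y)
      (∑ i, (x i • ((EuclideanSpace.proj (𝕜 := ℝ) i).comp DY)
          + Y x i • (EuclideanSpace.proj (𝕜 := ℝ) i) : EuclideanSpace ℝ (Fin n) →L[ℝ] ℝ)) x :=
    HasFDerivAt.fun_sum fun i _ => (hasFDerivAt_coord x i).mul (hYc i)
  have hq : HasFDerivAt (qq Y)
      (∑ i, (Y x i • ((EuclideanSpace.proj (𝕜 := ℝ) i).comp DY)
          + Y x i • ((EuclideanSpace.proj (𝕜 := ℝ) i).comp DY)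
          : EuclideanSpace ℝ (Fin n) →L[ℝ] ℝ)) x :=
    HasFDerivAt.fun_sum fun i _ => (hYc i).mul (hYc i)
  have hφ := (Real.hasDerivAt_rpow_const (p := b)
      (Or.inl (NN_pos hx).ne')).comp_hasFDerivAt x hN
  have hW := hφ.mul ((((hg.const_mul 2⁻¹).mul (hYc j)).add
      (((hasFDerivAt_coord x j).const_mul 4⁻¹).mul hq)))
  have hfd : fderiv ℝ (WW Y b j) x = _ := HasFDerivAt.fderiv (f := WW Y b j) hW
  rw [hfd]
  simp only [ContinuousLinearMap.add_apply, ContinuousLinearMap.smul_apply,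
    ContinuousLinearMap.coe_sum', Finset.sum_apply, ContinuousLinearMap.coe_comp',
    Function.comp_apply, PiLp.proj_apply, smul_eq_mul, EuclideanSpace.single_apply,
    mul_ite, mul_one, mul_zero, Finset.sum_add_distrib, Finset.sum_ite_eq, Finset.sum_ite_eq',
    Finset.mem_univ, if_true, Pi.mul_apply, Pi.add_apply]
  ring

end deriv

lemma integral_fderiv_apply_eq_zero {f : EuclideanSpace ℝ (Fin n) → ℝ}
    (hf : ContDiff ℝ 1 f) (hc : HasCompactSupport f) (v : EuclideanSpace ℝ (Fin n)) :
    ∫ x, fderiv ℝ f x v = 0 := by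
  have hfc : Continuous fun x => fderiv ℝ f x v :=
    (hf.continuous_fderiv one_ne_zero).clm_apply continuous_const
  have h2 : Integrable (fun x => (1 : ℝ) * fderiv ℝ f x v) (volume) := by
    simpa [one_mul] using hfc.integrable_of_hasCompactSupport (hc.fderiv_apply ℝ v)
  have h3 : Integrable (fun x => (1 : ℝ) * f x) (volume) := by
    simpa [one_mul] using hf.continuous.integrable_of_hasCompactSupport hc
  have h1 : Integrable (fun x => fderiv ℝ (fun _ => (1:ℝ)) x v * f x) (volume) := by
    simpa [fderiv_const_apply] using (integrable_zero _ ℝ (volume (α := EuclideanSpace ℝ (Fin n))))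
  have h := integral_mul_fderiv_eq_neg_fderiv_mul_of_integrable h1 h2 h3
    (fun x _ => differentiableAt_const _) (fun x _ => hf.differentiable one_ne_zero x)
  simpa [fderiv_const_apply] using h

/-- The key pointwise identity. -/
lemma key_pointwise (n : ℕ) (s b : ℝ)
    (Y : EuclideanSpace ℝ (Fin n) → EuclideanSpace ℝ (Fin n))
    (hY : ContDiff ℝ 1 Y)
    (h0 : tsupport Y ⊆ {x : EuclideanSpace ℝ (Fin n) | x ≠ 0})
    (hbs : b = (-2 * s - (n : ℝ)) / 2) (x : EuclideanSpace ℝ (Fin n)) :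
    ‖x‖ ^ (-2 * s - (n : ℝ) + 2) *
        ∑ i, ∑ j, (symGrad n Y i j x +
            (1/2) * diverg n Y x * (if i = j then (1:ℝ) else 0)) *
          Y x i * (x j / ‖x‖ ^ 2)
    = (∑ j, fderiv ℝ (WW Y b j) x (EuclideanSpace.single j 1))
      + (1/2) * (‖x‖ ^ (-2 * s - (n : ℝ)) *
          ((s - 1) * (∑ i, (Y x i) ^ 2) +
            (2 * s + n) * (∑ i, (x i / ‖x‖) * Y x i) ^ 2)) := by
  by_cases hxs : x ∈ tsupport Y
  · -- main computation, valid at any `x ≠ 0`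
    have hx0 : x ≠ 0 := h0 hxs
    have hN := NN_pos hx0
    set N := NN x with hNdef
    set D : Fin n → Fin n → ℝ :=
      fun a i => fderiv ℝ Y x (EuclideanSpace.single a 1) i with hD
    set g := gg Y x with hgdef
    set q := qq Y x with hqdef
    have hvpd : ∀ a i, vpd n Y a i x = D a i := fun a i => vpd_eq hY x a i
    have hdv : diverg n Y x = ∑ j, D j j :=
      Finset.sum_congr rfl fun i _ => hvpd i i
    have hnorm2 : (‖x‖ : ℝ) ^ (2 : ℕ) = N := (NN_eq_norm_sq x).symm
    have hr1 : ‖x‖ ^ (-2 * s - (n : ℝ) + 2) = N ^ (b + 1) := by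
      rw [rpow_norm]; congr 1; rw [hbs]; ring
    have hr2 : ‖x‖ ^ (-2 * s - (n : ℝ)) = N ^ b := by
      rw [rpow_norm]; congr 1; rw [hbs]
    have hqe : (∑ i, (Y x i) ^ 2) = q := by
      rw [hqdef, qq]; exact Finset.sum_congr rfl fun i _ => sq (Y x i)
    have hhat : (∑ i, (x i / ‖x‖) * Y x i) ^ 2 = g ^ 2 / N := by
      have h1 : (∑ i, (x i / ‖x‖) * Y x i) = g / ‖x‖ := by
        rw [hgdef, gg, Finset.sum_div]
        exact Finset.sum_congr rfl fun i _ => (div_mul_eq_mul_div _ _ _)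
      rw [h1, div_pow, hnorm2]
    -- reduce the LHS double sum
    have hperterm : ∀ i j, (symGrad n Y i j x +
          (1/2) * diverg n Y x * (if i = j then (1:ℝ) else 0)) * Y x i * (x j / ‖x‖ ^ 2)
        = (2⁻¹ * (D i j * (Y x i * x j)) + 2⁻¹ * (D j i * (Y x i * x j))
            + (2⁻¹ * diverg n Y x) * (if i = j then Y x i * x j else 0)) * N⁻¹ := by
      intro i j
      rw [show symGrad n Y i j x = (vpd n Y i j x + vpd n Y j i x) / 2 from rfl,
        hvpd, hvpd, hnorm2]
      by_cases h : i = j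
      · simp only [h, if_true]; ring
      · simp only [h, if_false]; ring
    have hsum1 : (∑ i, ∑ j, (symGrad n Y i j x +
          (1/2) * diverg n Y x * (if i = j then (1:ℝ) else 0)) * Y x i * (x j / ‖x‖ ^ 2))
        = (2⁻¹ * (∑ i, ∑ j, D i j * (Y x i * x j))
            + 2⁻¹ * (∑ i, ∑ j, D j i * (Y x i * x j))
            + (2⁻¹ * diverg n Y x) * (∑ i, ∑ j, if i = j then Y x i * x j else 0)) * N⁻¹ := by
      rw [Finset.sum_congr rfl fun i _ => Finset.sum_congr rfl fun j _ => hperterm i j]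
      simp only [← Finset.sum_mul, Finset.sum_add_distrib, ← Finset.mul_sum]
    have hA3 : (∑ i, ∑ j, if i = j then Y x i * x j else 0) = g := by
      rw [hgdef, gg]
      exact Finset.sum_congr rfl fun i _ => by simp [mul_comm]
    have hA1 : (∑ i, ∑ j, D i j * (Y x i * x j))
        = ∑ j, Y x j * (∑ i, x i * D j i) :=
      Finset.sum_congr rfl fun j _ => by
        rw [Finset.mul_sum]
        exact Finset.sum_congr rfl fun i _ => by ring
    have hA2 : (∑ i, ∑ j, D j i * (Y x i * x j))
        = ∑ j, x j * (∑ i, Y x i * D j i) := by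
      rw [Finset.sum_comm]
      exact Finset.sum_congr rfl fun j _ => by
        rw [Finset.mul_sum]
        exact Finset.sum_congr rfl fun i _ => by ring
    -- the divergence sum
    have hdiv : (∑ j, fderiv ℝ (WW Y b j) x (EuclideanSpace.single j 1))
        = N ^ b * (2⁻¹ * g) * (∑ j, D j j)
          + N ^ b * 2⁻¹ * (∑ j, Y x j * (∑ i, x i * D j i))
          + N ^ b * 2⁻¹ * q
          + N ^ b * 2⁻¹ * (∑ j, x j * (∑ i, Y x i * D j i))
          + (n : ℝ) * (N ^ b * 4⁻¹ * q)
          + (b * N ^ (b - 1) * g) * g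
          + (b * N ^ (b - 1) * 2⁻¹ * q) * N := by
      have hterm : ∀ j, fderiv ℝ (WW Y b j) x (EuclideanSpace.single j 1)
          = N ^ b * (2⁻¹ * g) * D j j
            + N ^ b * 2⁻¹ * (Y x j * (∑ i, x i * D j i))
            + N ^ b * 2⁻¹ * (Y x j * Y x j)
            + N ^ b * 2⁻¹ * (x j * (∑ i, Y x i * D j i))
            + N ^ b * 4⁻¹ * q
            + (b * N ^ (b - 1) * g) * (x j * Y x j)
            + (b * N ^ (b - 1) * 2⁻¹ * q) * (x j * x j) := by
        intro j
        rw [fderiv_WW_apply hY b j x hx0]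
        ring
      rw [Finset.sum_congr rfl fun j _ => hterm j]
      simp only [Finset.sum_add_distrib, ← Finset.mul_sum, Finset.sum_const,
        Finset.card_univ, Fintype.card_fin, nsmul_eq_mul]
      have e1 : (∑ j, Y x j * Y x j) = q := rfl
      have e2 : (∑ j, x j * Y x j) = g := rfl
      have e3 : (∑ j, x j * x j) = N := rfl
      rw [e1, e2, e3]
      ring
    -- put everything together
    rw [hsum1, hA1, hA2, hA3, hdiv, hr1, hr2, hqe, hhat, hdv]
    have e1 : N ^ (b + 1) = N ^ b * N := Real.rpow_add_one hN.ne' b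
    have e2 : N ^ (b - 1) = N ^ b / N := Real.rpow_sub_one hN.ne' b
    rw [e1, e2, hbs]
    field_simp
    ring
  · -- off the support everything vanishes
    have hYx : ∀ i, Y x i = 0 := fun i =>
      apply_zero i (image_eq_zero_of_notMem_tsupport hxs)
    have hfd : ∀ j, fderiv ℝ (WW Y b j) x (EuclideanSpace.single j 1) = 0 := by
      intro j
      have hev : (WW Y b j) =ᶠ[nhds x] (fun _ => (0:ℝ)) := by
        filter_upwards [(isClosed_tsupport Y).isOpen_compl.mem_nhds hxs] with y hy
        exact WW_zero (image_eq_zero_of_notMem_tsupport hy)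
      rw [hev.fderiv_eq, fderiv_fun_const]
      rfl
    simp [hfd, hYx]

end RK

/-- Flat-case radial identity for the Killing operator:
`∫ r^{−2s−n+2} Σᵢⱼ(S(Y)ᵢⱼ + ½(div Y)δᵢⱼ) Yᵢ (xⱼ/r²)
  = ½ ∫ r^{−2s−n} [(s−1)|Y|² + (2s+n)⟨x̂,Y⟩²]`
for `Y` of class `C¹` compactly supported away from the origin. -/
theorem radial_killing_identity (n : ℕ) (hn : 1 ≤ n) (s : ℝ)
    (Y : EuclideanSpace ℝ (Fin n) → EuclideanSpace ℝ (Fin n))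
    (hY : ContDiff ℝ 1 Y) (hsupp : HasCompactSupport Y)
    (h0 : tsupport Y ⊆ {x : EuclideanSpace ℝ (Fin n) | x ≠ 0}) :
    ∫ x : EuclideanSpace ℝ (Fin n),
        ‖x‖ ^ (-2 * s - (n : ℝ) + 2) *
          ∑ i, ∑ j, (symGrad n Y i j x +
              (1/2) * diverg n Y x * (if i = j then (1:ℝ) else 0)) *
            Y x i * (x j / ‖x‖ ^ 2)
    = (1/2) * ∫ x : EuclideanSpace ℝ (Fin n),
        ‖x‖ ^ (-2 * s - (n : ℝ)) *
          ((s - 1) * (∑ i, (Y x i) ^ 2) +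
            (2 * s + n) * (∑ i, (x i / ‖x‖) * Y x i) ^ 2) := by
  classical
  set b : ℝ := (-2 * s - (n : ℝ)) / 2 with hb
  set h₂ : EuclideanSpace ℝ (Fin n) → ℝ := fun x =>
    ‖x‖ ^ (-2 * s - (n : ℝ)) *
      ((s - 1) * (∑ i, (Y x i) ^ 2) +
        (2 * s + n) * (∑ i, (x i / ‖x‖) * Y x i) ^ 2) with hh₂
  -- integrability of the divergence terms
  have hWcd : ∀ j, ContDiff ℝ 1 (RK.WW Y b j) := RK.WW_contDiff hY h0 b
  have hWcs : ∀ j, HasCompactSupport (RK.WW Y b j) := RK.WW_hasCompactSupport hsupp b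
  have hintW : ∀ j : Fin n,
      Integrable (fun x => fderiv ℝ (RK.WW Y b j) x (EuclideanSpace.single j 1)) volume := by
    intro j
    exact (((hWcd j).continuous_fderiv one_ne_zero).clm_apply
      continuous_const).integrable_of_hasCompactSupport
      ((hWcs j).fderiv_apply ℝ _)
  -- integrability of h₂
  have hzero : ∀ y, Y y = 0 → h₂ y = 0 := by
    intro y hy
    simp [hh₂, RK.apply_zero _ hy]
  have hcont : Continuous h₂ := by
    rw [continuous_iff_continuousAt]
    intro x
    by_cases hx : x ∈ tsupport Y
    · have hx0 : x ≠ 0 := h0 hx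
      have hnx : ‖x‖ ≠ 0 := norm_ne_zero_iff.mpr hx0
      have h1 : ContinuousAt (fun y : EuclideanSpace ℝ (Fin n) =>
          ‖y‖ ^ (-2 * s - (n : ℝ))) x :=
        (Real.continuousAt_rpow_const _ _ (Or.inl hnx)).comp continuous_norm.continuousAt
      have hYci : ∀ i, Continuous (fun y => Y y i) := fun i =>
        (RK.contDiff_coord i).continuous.comp hY.continuous
      have h2 : ContinuousAt (fun y : EuclideanSpace ℝ (Fin n) =>
          (s - 1) * (∑ i, (Y y i) ^ 2) +
            (2 * s + n) * (∑ i, (y i / ‖y‖) * Y y i) ^ 2) x := by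
        apply ContinuousAt.add
        · refine continuousAt_const.mul ?_
          exact tendsto_finset_sum _ fun i _ => (((hYci i).continuousAt).pow 2)
        · refine continuousAt_const.mul (ContinuousAt.pow ?_ 2)
          refine tendsto_finset_sum _ fun i _ => ContinuousAt.mul ?_ (hYci i).continuousAt
          exact ((RK.contDiff_coord i).continuous.continuousAt).div
            continuous_norm.continuousAt hnx
      exact h1.mul h2
    · have hev : h₂ =ᶠ[nhds x] (fun _ => (0:ℝ)) := by
        filter_upwards [(isClosed_tsupport Y).isOpen_compl.mem_nhds hx] with y hy
        exact hzero y (image_eq_zero_of_notMem_tsupport hy)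
      exact continuousAt_const.congr hev.symm
  have hcs : HasCompactSupport h₂ := by
    apply hsupp.mono
    intro y hy
    rw [Function.mem_support] at hy ⊢
    intro h
    exact hy (hzero y h)
  have hinth₂ : Integrable h₂ volume := hcont.integrable_of_hasCompactSupport hcs
  -- pointwise identity
  have key := RK.key_pointwise n s b Y hY h0 hb
  calc
    ∫ x : EuclideanSpace ℝ (Fin n),
        ‖x‖ ^ (-2 * s - (n : ℝ) + 2) *
          ∑ i, ∑ j, (symGrad n Y i j x +
              (1/2) * diverg n Y x * (if i = j then (1:ℝ) else 0)) *
            Y x i * (x j / ‖x‖ ^ 2)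
      = ∫ x : EuclideanSpace ℝ (Fin n),
          ((∑ j, fderiv ℝ (RK.WW Y b j) x (EuclideanSpace.single j 1)) + (1/2) * h₂ x) :=
        integral_congr_ae (Filter.Eventually.of_forall key)
    _ = (∫ x : EuclideanSpace ℝ (Fin n),
          ∑ j, fderiv ℝ (RK.WW Y b j) x (EuclideanSpace.single j 1))
        + ∫ x : EuclideanSpace ℝ (Fin n), (1/2) * h₂ x := by
        exact integral_add (integrable_finset_sum _ fun j _ => hintW j)
          (hinth₂.const_mul _)
    _ = (1/2) * ∫ x : EuclideanSpace ℝ (Fin n), h₂ x := by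
        rw [integral_finset_sum _ fun j _ => hintW j]
        rw [Finset.sum_eq_zero fun j _ =>
          RK.integral_fderiv_apply_eq_zero (hWcd j) (hWcs j) _]
        rw [integral_const_mul]
        ring
end

section
/- Let n ≥ 1 and s ∈ ℝ. For every C¹ vector field Y on ℝⁿ with compact support contained in the open half-space {x ∈ ℝⁿ : xₙ > 0}, one has ∫ xₙ^{2s} Σᵢ,ⱼ (S(Y)ᵢⱼ + (1/2)(div Y)δᵢⱼ) Yᵢ ((eₙ)ⱼ/xₙ) dx = (1/2)(1/2 − s) ∫ xₙ^{2s−2} ( |Y|² + 2Yₙ² ) dx, where eₙ is the n-th standard basis vector. -/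
open MeasureTheory Real Filter Topology

section Aux
variable {n : ℕ} (ν : Fin n) (Y : EuclideanSpace ℝ (Fin n) → EuclideanSpace ℝ (Fin n))

lemma comp_contDiff (hY : ContDiff ℝ 1 Y) (j : Fin n) :
    ContDiff ℝ 1 (fun x => Y x j) := by
  exact ((EuclideanSpace.proj (𝕜 := ℝ) j).contDiff.comp hY :)

lemma eventually_zero {x : EuclideanSpace ℝ (Fin n)} (hx : x ∉ tsupport Y)
    (g : EuclideanSpace ℝ (Fin n) → ℝ) (hg0 : ∀ y ∉ tsupport Y, g y = 0) :
    g =ᶠ[𝓝 x] (fun _ => 0) := by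
  have h : ∀ᶠ y in 𝓝 x, y ∈ (tsupport Y)ᶜ :=
    (isClosed_tsupport Y).isOpen_compl.eventually_mem hx
  exact h.mono fun y hy => hg0 y hy

lemma fderiv_zero_off (g : EuclideanSpace ℝ (Fin n) → ℝ)
    (hg0 : ∀ y ∉ tsupport Y, g y = 0) {x : EuclideanSpace ℝ (Fin n)}
    (hx : x ∉ tsupport Y) : fderiv ℝ g x = 0 := by
  rw [(eventually_zero Y hx g hg0).fderiv_eq]
  exact fderiv_const_apply 0

lemma hproj (x : EuclideanSpace ℝ (Fin n)) :
    HasFDerivAt (fun y : EuclideanSpace ℝ (Fin n) => y ν)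
      (EuclideanSpace.proj (𝕜 := ℝ) ν) x :=
  (EuclideanSpace.proj (𝕜 := ℝ) ν).hasFDerivAt

lemma mulAux (hY : ContDiff ℝ 1 Y) (hsupp : HasCompactSupport Y)
    (hpos : tsupport Y ⊆ {x | 0 < x ν}) (q : ℝ)
    (g : EuclideanSpace ℝ (Fin n) → ℝ) (hg : ContDiff ℝ 1 g)
    (hg0 : ∀ y ∉ tsupport Y, g y = 0) :
    ContDiff ℝ 1 (fun x => (x ν) ^ q * g x) ∧
      HasCompactSupport (fun x => (x ν) ^ q * g x) := by
  constructor
  · rw [contDiff_iff_contDiffAt]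
    intro x
    by_cases hx : x ∈ tsupport Y
    · have hne : x ν ≠ 0 := ne_of_gt (hpos hx)
      have h1 : ContDiffAt ℝ 1 (fun y : EuclideanSpace ℝ (Fin n) => (y ν) ^ q) x :=
        ContDiffAt.comp (g := fun t : ℝ => t ^ q) x (Real.contDiffAt_rpow_const_of_ne hne)
          ((EuclideanSpace.proj (𝕜 := ℝ) ν).contDiff (n := 1)).contDiffAt
      exact h1.mul hg.contDiffAt
    · exact (contDiffAt_const (c := (0:ℝ))).congr_of_eventuallyEq
        (eventually_zero Y hx _ (fun y hy => by simp [hg0 y hy]))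
  · exact HasCompactSupport.intro hsupp (fun x hx => by simp [hg0 x hx])

end Aux

section Key
variable {n : ℕ} (ν : Fin n) (Y : EuclideanSpace ℝ (Fin n) → EuclideanSpace ℝ (Fin n))

lemma integral_fderiv_apply_eq_zero (F : EuclideanSpace ℝ (Fin n) → ℝ)
    (hF : ContDiff ℝ 1 F) (hFsupp : HasCompactSupport F) (v : EuclideanSpace ℝ (Fin n)) :
    ∫ x, fderiv ℝ F x v = 0 := by
  obtain ⟨C, hC⟩ := hF.lipschitzWith_of_hasCompactSupport hFsupp one_ne_zero
  have h := LipschitzWith.integral_lineDeriv_mul_eq (μ := volume)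
    (LipschitzWith.const (1:ℝ)) hC hFsupp v
  have hlc : ∀ x : EuclideanSpace ℝ (Fin n), lineDeriv ℝ (fun _ => (1:ℝ)) x v = 0 := by
    intro x
    rw [(differentiableAt_const (1:ℝ)).lineDeriv_eq_fderiv, fderiv_fun_const]
    simp
  have h2 : ∀ x : EuclideanSpace ℝ (Fin n), lineDeriv ℝ F x (-v) = -(fderiv ℝ F x v) := by
    intro x
    rw [((hF.differentiable one_ne_zero) x).lineDeriv_eq_fderiv, map_neg]
  simp only [hlc, h2, zero_mul, integral_zero, mul_one, integral_neg] at h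
  linarith

lemma key_integral (hY : ContDiff ℝ 1 Y) (hsupp : HasCompactSupport Y)
    (hpos : tsupport Y ⊆ {x | 0 < x ν}) (p : ℝ) :
    ∫ x : EuclideanSpace ℝ (Fin n), (x ν) ^ p *
        ∑ i, ((vpd n Y i ν x + vpd n Y ν i x)/2 +
          (1/2) * (∑ k, vpd n Y k k x) * (if i = ν then (1:ℝ) else 0)) * Y x i
    = -(p/2) * (∫ x : EuclideanSpace ℝ (Fin n), (x ν) ^ (p-1) * (Y x ν)^2)
      - (p/4) * (∫ x : EuclideanSpace ℝ (Fin n), (x ν) ^ (p-1) * ∑ j, (Y x j)^2) := by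
  classical
  have hY0 : ∀ y ∉ tsupport Y, ∀ j, Y y j = 0 := fun y hy j => by
    rw [image_eq_zero_of_notMem_tsupport hy]; rfl
  -- the auxiliary functions
  set F : Fin n → EuclideanSpace ℝ (Fin n) → ℝ :=
    fun i x => (x ν) ^ p * (Y x i * Y x ν) with hF
  set G : EuclideanSpace ℝ (Fin n) → ℝ :=
    fun x => (x ν) ^ p * ∑ j, (Y x j)^2 with hG
  set D : Fin n → EuclideanSpace ℝ (Fin n) → ℝ :=
    fun i x => fderiv ℝ (F i) x (EuclideanSpace.single i 1) with hD
  set DG : EuclideanSpace ℝ (Fin n) → ℝ :=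
    fun x => fderiv ℝ G x (EuclideanSpace.single ν 1) with hDG
  -- regularity
  have hFreg : ∀ i, ContDiff ℝ 1 (F i) ∧ HasCompactSupport (F i) := fun i =>
    mulAux ν Y hY hsupp hpos p _ ((comp_contDiff Y hY i).mul (comp_contDiff Y hY ν))
      (fun y hy => by simp [hY0 y hy])
  have hGreg : ContDiff ℝ 1 G ∧ HasCompactSupport G :=
    mulAux ν Y hY hsupp hpos p _
      (ContDiff.sum fun j _ => (comp_contDiff Y hY j).pow 2)
      (fun y hy => by simp [hY0 y hy])
  have hAreg : ContDiff ℝ 1 (fun x : EuclideanSpace ℝ (Fin n) => (x ν) ^ (p-1) * (Y x ν)^2) ∧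
      HasCompactSupport (fun x : EuclideanSpace ℝ (Fin n) => (x ν) ^ (p-1) * (Y x ν)^2) :=
    mulAux ν Y hY hsupp hpos (p-1) _ ((comp_contDiff Y hY ν).pow 2)
      (fun y hy => by simp [hY0 y hy])
  have hBreg : ContDiff ℝ 1 (fun x : EuclideanSpace ℝ (Fin n) => (x ν) ^ (p-1) * ∑ j, (Y x j)^2) ∧
      HasCompactSupport (fun x : EuclideanSpace ℝ (Fin n) => (x ν) ^ (p-1) * ∑ j, (Y x j)^2) :=
    mulAux ν Y hY hsupp hpos (p-1) _ (ContDiff.sum fun j _ => (comp_contDiff Y hY j).pow 2)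
      (fun y hy => by simp [hY0 y hy])
  -- pointwise identity
  have hpt : ∀ x : EuclideanSpace ℝ (Fin n),
      (x ν) ^ p * ∑ i, ((vpd n Y i ν x + vpd n Y ν i x)/2 +
          (1/2) * (∑ k, vpd n Y k k x) * (if i = ν then (1:ℝ) else 0)) * Y x i
      = (1/2) * (∑ i, D i x) + (1/4) * DG x
        - (p/2) * ((x ν) ^ (p-1) * (Y x ν)^2)
        - (p/4) * ((x ν) ^ (p-1) * ∑ j, (Y x j)^2) := by
    intro x
    by_cases hx : x ∈ tsupport Y
    · have hxν : 0 < x ν := hpos hx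
      have hne : x ν ≠ 0 := ne_of_gt hxν
      have hdY : ∀ j, HasFDerivAt (fun y => Y y j) (fderiv ℝ (fun y => Y y j) x) x :=
        fun j => ((comp_contDiff Y hY j).differentiable one_ne_zero x).hasFDerivAt
      have hrp : HasFDerivAt (fun y : EuclideanSpace ℝ (Fin n) => (y ν) ^ p)
          ((p * (x ν) ^ (p-1)) • (EuclideanSpace.proj (𝕜 := ℝ) ν)) x :=
        (hproj ν x).rpow_const (Or.inl hne)
      have hDi : ∀ i, D i x
          = (x ν) ^ p * (Y x i * vpd n Y i ν x + Y x ν * vpd n Y i i x)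
            + (Y x i * Y x ν) * (p * (x ν) ^ (p-1)) * (if ν = i then (1:ℝ) else 0) := by
        intro i
        have h := (hrp.fun_mul ((hdY i).fun_mul (hdY ν))).fderiv
        rw [hD]; simp only
        rw [h]
        by_cases hc : ν = i <;>
          simp [ContinuousLinearMap.add_apply, ContinuousLinearMap.smul_apply,
            smul_eq_mul, EuclideanSpace.single_apply, vpd, hc] <;> try ring
      have hDGx : DG x
          = (x ν) ^ p * (2 * ∑ j, Y x j * vpd n Y ν j x)
            + (∑ j, (Y x j)^2) * (p * (x ν) ^ (p-1)) := by
        have hsq : ∀ j, HasFDerivAt (fun y => (Y y j)^2)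
            (Y x j • fderiv ℝ (fun y => Y y j) x + Y x j • fderiv ℝ (fun y => Y y j) x) x := by
          intro j
          simpa only [← pow_two] using (hdY j).fun_mul (hdY j)
        have hGd : HasFDerivAt G
            ((x ν) ^ p • ∑ j, (Y x j • fderiv ℝ (fun y => Y y j) x
                + Y x j • fderiv ℝ (fun y => Y y j) x)
              + (∑ j, (Y x j)^2) • ((p * (x ν) ^ (p-1)) • EuclideanSpace.proj (𝕜 := ℝ) ν)) x :=
          hrp.fun_mul (HasFDerivAt.fun_sum (fun j _ => hsq j))
        rw [hDG]; simp only
        rw [hGd.fderiv]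
        simp [ContinuousLinearMap.add_apply, ContinuousLinearMap.smul_apply,
          ContinuousLinearMap.sum_apply, smul_eq_mul, EuclideanSpace.single_apply,
          vpd, Finset.mul_sum, Finset.sum_add_distrib]
        rw [← Finset.sum_add_distrib]
        exact Finset.sum_congr rfl fun j _ => by ring
      have hDsum : ∑ i, D i x
          = (x ν) ^ p * ((∑ i, Y x i * vpd n Y i ν x) + Y x ν * ∑ k, vpd n Y k k x)
            + p * (x ν) ^ (p-1) * (Y x ν)^2 := by
        simp only [hDi]
        rw [Finset.sum_add_distrib]
        congr 1
        · rw [← Finset.mul_sum, Finset.sum_add_distrib, ← Finset.mul_sum]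
        · have : ∀ i, (Y x i * Y x ν) * (p * (x ν) ^ (p-1)) * (if ν = i then (1:ℝ) else 0)
              = if ν = i then (Y x i * Y x ν) * (p * (x ν) ^ (p-1)) else 0 := by
            intro i; split <;> simp
          simp only [this, Finset.sum_ite_eq, Finset.mem_univ, if_true]
          ring
      rw [hDsum, hDGx]
      have hLsum : ∑ i, ((vpd n Y i ν x + vpd n Y ν i x)/2 +
            (1/2) * (∑ k, vpd n Y k k x) * (if i = ν then (1:ℝ) else 0)) * Y x i
          = (∑ i, Y x i * vpd n Y i ν x)/2 + (∑ i, Y x i * vpd n Y ν i x)/2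
            + (∑ k, vpd n Y k k x) * Y x ν / 2 := by
        have : ∀ i, ((vpd n Y i ν x + vpd n Y ν i x)/2 +
              (1/2) * (∑ k, vpd n Y k k x) * (if i = ν then (1:ℝ) else 0)) * Y x i
            = Y x i * vpd n Y i ν x / 2 + Y x i * vpd n Y ν i x / 2
              + (if i = ν then (∑ k, vpd n Y k k x) * Y x i / 2 else 0) := by
          intro i; split <;> ring
        simp only [this, Finset.sum_add_distrib, Finset.sum_ite_eq', Finset.mem_univ, if_true]
        rw [← Finset.sum_div, ← Finset.sum_div]
      rw [hLsum]
      ring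
    · have hz := hY0 x hx
      have hDz : ∀ i, D i x = 0 := by
        intro i
        rw [hD]
        simp only
        rw [fderiv_zero_off Y (F i) (fun y hy => by simp [hF, hY0 y hy]) hx]
        rfl
      have hDGz : DG x = 0 := by
        rw [hDG]
        simp only
        rw [fderiv_zero_off Y G (fun y hy => by simp [hG, hY0 y hy]) hx]
        rfl
      simp [hz, hDz, hDGz]
  -- integrability
  have hDsupp : ∀ i, HasCompactSupport (D i) := by
    intro i
    refine HasCompactSupport.intro hsupp (fun y hy => ?_)
    rw [hD]; simp only
    rw [fderiv_zero_off Y (F i) (fun z hz => by simp [hF, hY0 z hz]) hy]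
    rfl
  have intD : ∀ i, Integrable (D i) (volume) := by
    intro i
    refine Continuous.integrable_of_hasCompactSupport ?_ (hDsupp i)
    exact ((hFreg i).1.continuous_fderiv one_ne_zero).clm_apply continuous_const
  have hDGsupp : HasCompactSupport DG := by
    refine HasCompactSupport.intro hsupp (fun y hy => ?_)
    rw [hDG]; simp only
    rw [fderiv_zero_off Y G (fun z hz => by simp [hG, hY0 z hz]) hy]
    rfl
  have intDG : Integrable DG (volume) := by
    refine Continuous.integrable_of_hasCompactSupport ?_ hDGsupp
    exact (hGreg.1.continuous_fderiv one_ne_zero).clm_apply continuous_const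
  have intA : Integrable (fun x : EuclideanSpace ℝ (Fin n) => (x ν) ^ (p-1) * (Y x ν)^2)
      (volume) := hAreg.1.continuous.integrable_of_hasCompactSupport hAreg.2
  have intB : Integrable
      (fun x : EuclideanSpace ℝ (Fin n) => (x ν) ^ (p-1) * ∑ j, (Y x j)^2)
      (volume) := hBreg.1.continuous.integrable_of_hasCompactSupport hBreg.2
  have hfun : (fun x : EuclideanSpace ℝ (Fin n) => (x ν) ^ p *
        ∑ i, ((vpd n Y i ν x + vpd n Y ν i x)/2 +
          (1/2) * (∑ k, vpd n Y k k x) * (if i = ν then (1:ℝ) else 0)) * Y x i)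
      = fun x => ((1/2) * (∑ i, D i x) + (1/4) * DG x)
        - ((p/2) * ((x ν) ^ (p-1) * (Y x ν)^2)
          + (p/4) * ((x ν) ^ (p-1) * ∑ j, (Y x j)^2)) := by
    funext x
    rw [hpt x]
    ring
  rw [hfun]
  have j1 : Integrable (fun x => (1/2 : ℝ) * ∑ i, D i x) (volume) :=
    (integrable_finset_sum Finset.univ (fun i _ => intD i)).const_mul _
  have j2 : Integrable (fun x => (1/4 : ℝ) * DG x) (volume) := intDG.const_mul _
  have j3 : Integrable (fun x : EuclideanSpace ℝ (Fin n) =>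
      (p/2) * ((x ν) ^ (p-1) * (Y x ν)^2)) (volume) := intA.const_mul _
  have j4 : Integrable (fun x : EuclideanSpace ℝ (Fin n) =>
      (p/4) * ((x ν) ^ (p-1) * ∑ j, (Y x j)^2)) (volume) := intB.const_mul _
  have j12 : Integrable (fun x => (1/2 : ℝ) * ∑ i, D i x + (1/4 : ℝ) * DG x) (volume) :=
    j1.add j2
  have j34 : Integrable (fun x : EuclideanSpace ℝ (Fin n) =>
      (p/2) * ((x ν) ^ (p-1) * (Y x ν)^2)
        + (p/4) * ((x ν) ^ (p-1) * ∑ j, (Y x j)^2)) (volume) := j3.add j4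
  rw [integral_sub j12 j34, integral_add j1 j2, integral_add j3 j4,
    integral_const_mul, integral_const_mul, integral_const_mul, integral_const_mul,
    integral_finset_sum Finset.univ (fun i _ => intD i)]
  have hz1 : ∀ i ∈ Finset.univ, (∫ x, D i x) = 0 := fun i _ =>
    integral_fderiv_apply_eq_zero (F i) (hFreg i).1 (hFreg i).2 _
  rw [Finset.sum_congr rfl hz1, Finset.sum_const, smul_zero]
  have hz2 : (∫ x, DG x) = 0 :=
    integral_fderiv_apply_eq_zero G hGreg.1 hGreg.2 _
  rw [hz2]
  ring

end Key

lemma main_aux {n : ℕ} (ν : Fin n) (s : ℝ)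
    (Y : EuclideanSpace ℝ (Fin n) → EuclideanSpace ℝ (Fin n))
    (hY : ContDiff ℝ 1 Y) (hsupp : HasCompactSupport Y)
    (hpos : tsupport Y ⊆ {x : EuclideanSpace ℝ (Fin n) | 0 < x ν}) :
    ∫ x : EuclideanSpace ℝ (Fin n),
        (x ν) ^ (2 * s) *
          ∑ i, ∑ j, (((vpd n Y i j x + vpd n Y j i x) / 2) +
              (1/2) * (∑ k, vpd n Y k k x) * (if i = j then (1:ℝ) else 0)) *
            Y x i * ((if j = ν then (1:ℝ) else 0) / x ν)
    = (1/2) * (1/2 - s) * ∫ x : EuclideanSpace ℝ (Fin n),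
        (x ν) ^ (2 * s - 2) * ((∑ i, (Y x i) ^ 2) + 2 * (Y x ν) ^ 2) := by
  classical
  have hY0 : ∀ y ∉ tsupport Y, ∀ j, Y y j = 0 := fun y hy j => by
    rw [image_eq_zero_of_notMem_tsupport hy]; rfl
  have hred : ∀ x : EuclideanSpace ℝ (Fin n),
      (x ν) ^ (2 * s) *
          ∑ i, ∑ j, (((vpd n Y i j x + vpd n Y j i x) / 2) +
              (1/2) * (∑ k, vpd n Y k k x) * (if i = j then (1:ℝ) else 0)) *
            Y x i * ((if j = ν then (1:ℝ) else 0) / x ν)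
      = (x ν) ^ (2*s - 1) * ∑ i, ((vpd n Y i ν x + vpd n Y ν i x)/2 +
          (1/2) * (∑ k, vpd n Y k k x) * (if i = ν then (1:ℝ) else 0)) * Y x i := by
    intro x
    by_cases hx : x ∈ tsupport Y
    · have hxν : 0 < x ν := hpos hx
      have hinner : ∀ i : Fin n,
          ∑ j, (((vpd n Y i j x + vpd n Y j i x) / 2) +
              (1/2) * (∑ k, vpd n Y k k x) * (if i = j then (1:ℝ) else 0)) *
            Y x i * ((if j = ν then (1:ℝ) else 0) / x ν)
          = ((((vpd n Y i ν x + vpd n Y ν i x) / 2) +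
              (1/2) * (∑ k, vpd n Y k k x) * (if i = ν then (1:ℝ) else 0)) *
            Y x i) * (1 / x ν) := by
        intro i
        have hterm : ∀ j : Fin n, (((vpd n Y i j x + vpd n Y j i x) / 2) +
              (1/2) * (∑ k, vpd n Y k k x) * (if i = j then (1:ℝ) else 0)) *
            Y x i * ((if j = ν then (1:ℝ) else 0) / x ν)
            = if j = ν then ((((vpd n Y i ν x + vpd n Y ν i x) / 2) +
              (1/2) * (∑ k, vpd n Y k k x) * (if i = ν then (1:ℝ) else 0)) *
            Y x i) * (1 / x ν) else 0 := by
          intro j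
          by_cases hj : j = ν <;> simp [hj]
        simp only [hterm, Finset.sum_ite_eq', Finset.mem_univ, if_true]
      simp only [hinner]
      rw [← Finset.sum_mul]
      have hpow : (x ν) ^ (2*s - 1) = (x ν) ^ (2*s) * (1 / (x ν)) := by
        rw [Real.rpow_sub hxν, Real.rpow_one, div_eq_mul_inv, one_div]
      rw [hpow]
      ring
    · have hz := hY0 x hx
      simp [hz]
  have hfun := funext hred
  rw [hfun, key_integral ν Y hY hsupp hpos (2*s - 1)]
  have he : (2*s - 1) - 1 = 2*s - 2 := by ring
  rw [he]
  -- integrability for the RHS split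
  have hAreg := mulAux ν Y hY hsupp hpos (2*s-2) (fun x => (Y x ν)^2)
      ((comp_contDiff Y hY ν).pow 2) (fun y hy => by simp [hY0 y hy])
  have hBreg := mulAux ν Y hY hsupp hpos (2*s-2) (fun x => ∑ j, (Y x j)^2)
      (ContDiff.sum fun j _ => (comp_contDiff Y hY j).pow 2)
      (fun y hy => by simp [hY0 y hy])
  have intA : Integrable (fun x : EuclideanSpace ℝ (Fin n) =>
      (x ν) ^ (2*s-2) * (Y x ν)^2) (volume) :=
    hAreg.1.continuous.integrable_of_hasCompactSupport hAreg.2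
  have intB : Integrable (fun x : EuclideanSpace ℝ (Fin n) =>
      (x ν) ^ (2*s-2) * ∑ j, (Y x j)^2) (volume) :=
    hBreg.1.continuous.integrable_of_hasCompactSupport hBreg.2
  have hsplit : (fun x : EuclideanSpace ℝ (Fin n) =>
        (x ν) ^ (2 * s - 2) * ((∑ i, (Y x i) ^ 2) + 2 * (Y x ν) ^ 2))
      = fun x => ((x ν) ^ (2*s-2) * ∑ j, (Y x j)^2)
          + 2 * ((x ν) ^ (2*s-2) * (Y x ν)^2) := by
    funext x; ring
  rw [hsplit, integral_add intB (intA.const_mul 2), integral_const_mul]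
  ring

/-- Flat-case half-space identity for the Killing operator:
`∫ xₙ^{2s} Σᵢⱼ(S(Y)ᵢⱼ + ½(div Y)δᵢⱼ) Yᵢ ((eₙ)ⱼ/xₙ)
  = ½(½ − s) ∫ xₙ^{2s−2}(|Y|² + 2Yₙ²)`
for `Y` of class `C¹` compactly supported in `{xₙ > 0}`. -/
theorem halfspace_killing_identity (n : ℕ) (hn : 1 ≤ n) (s : ℝ)
    (Y : EuclideanSpace ℝ (Fin n) → EuclideanSpace ℝ (Fin n))
    (hY : ContDiff ℝ 1 Y) (hsupp : HasCompactSupport Y)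
    (hpos : tsupport Y ⊆
      {x : EuclideanSpace ℝ (Fin n) | 0 < x ⟨n - 1, by omega⟩}) :
    ∫ x : EuclideanSpace ℝ (Fin n),
        (x (⟨n - 1, by omega⟩ : Fin n)) ^ (2 * s) *
          ∑ i, ∑ j, (symGrad n Y i j x +
              (1/2) * diverg n Y x * (if i = j then (1:ℝ) else 0)) *
            Y x i *
            ((if j = (⟨n - 1, by omega⟩ : Fin n) then (1:ℝ) else 0) /
              x (⟨n - 1, by omega⟩ : Fin n))
    = (1/2) * (1/2 - s) * ∫ x : EuclideanSpace ℝ (Fin n),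
        (x (⟨n - 1, by omega⟩ : Fin n)) ^ (2 * s - 2) *
          ((∑ i, (Y x i) ^ 2) + 2 * (Y x (⟨n - 1, by omega⟩ : Fin n)) ^ 2) := by
  simp only [symGrad, diverg]
  exact main_aux ⟨n-1, by omega⟩ s Y hY hsupp hpos
end

section
/- Let m > 0, a > 2, and C₀, C₁ ≥ 0. Let A, B, C : ℝ³ → ℝ be C¹ functions such that for all x with ‖x‖ ≥ 1 one has |A(x)|, |B(x)|, |C(x)| ≤ C₀‖x‖^{−a}, the first partial derivatives satisfy |∂ᵢA(x)|, |∂ᵢB(x)|, |∂ᵢC(x)| ≤ C₀‖x‖^{−a−1} for all i, and |∂ₓA(x) + ∂_yB(x) + ∂_zC(x)| ≤ C₁‖x‖^{−(m+3)}. Then there exist C¹ functions P, Q, R on {x ∈ ℝ³ : ‖x‖ > 1} and a constant C₂ ≥ 0, depending only on m, a, C₀, C₁, such that for all ‖x‖ > 1: |(∂_yR − ∂_zQ) − A| ≤ C₂‖x‖^{−(m+2)}, |(∂_zP − ∂ₓR) − B| ≤ C₂‖x‖^{−(m+2)}, and |(∂ₓQ − ∂_yP) − C| ≤ C₂‖x‖^{−(m+2)}.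 (Equivalently: the two-form ν = A dy∧dz + B dz∧dx + C dx∧dy admits a one-form primitive σ = P dx + Q dy + R dz with dσ = ν + O(‖x‖^{−(m+2)}).) -/
open Real MeasureTheory Set Topology Filter

/-- The `i`-th partial derivative of a function on `ℝ³`. -/
noncomputable def pd3 (f : EuclideanSpace ℝ (Fin 3) → ℝ)
    (i : Fin 3) (x : EuclideanSpace ℝ (Fin 3)) : ℝ :=
  fderiv ℝ f x (EuclideanSpace.single i 1)

set_option synthInstance.maxHeartbeats 1000000
set_option maxHeartbeats 1000000
set_option linter.unusedVariables false

namespace APL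

local notation "E3" => EuclideanSpace ℝ (Fin 3)

lemma abs_coord_le_norm (v : E3) (i : Fin 3) : |v i| ≤ ‖v‖ := by
  rw [EuclideanSpace.norm_eq, ← Real.sqrt_sq (abs_nonneg (v i))]
  apply Real.sqrt_le_sqrt
  have := Finset.single_le_sum (f := fun j : Fin 3 => ‖v j‖ ^ 2)
    (fun j _ => sq_nonneg _) (Finset.mem_univ i)
  simpa [Real.norm_eq_abs, sq_abs] using this

lemma norm_proj_le (j : Fin 3) : ‖(EuclideanSpace.proj j : E3 →L[ℝ] ℝ)‖ ≤ 1 := by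
  refine ContinuousLinearMap.opNorm_le_bound _ zero_le_one fun v => ?_
  simpa using abs_coord_le_norm v j

lemma sum_coord_single (v : E3) : ∑ i : Fin 3, v i • EuclideanSpace.single i (1:ℝ) = v := by
  have h := (EuclideanSpace.basisFun (Fin 3) ℝ).sum_repr v
  simpa [EuclideanSpace.basisFun_apply, EuclideanSpace.basisFun_repr] using h

lemma clm_apply_eq_sum (L : E3 →L[ℝ] ℝ) (v : E3) :
    L v = ∑ i : Fin 3, v i * L (EuclideanSpace.single i 1) := by
  conv_lhs => rw [← sum_coord_single v]
  rw [map_sum]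
  simp [smul_eq_mul]

lemma fderiv_apply_eq (f : E3 → ℝ) (x v : E3) :
    fderiv ℝ f x v = ∑ i : Fin 3, v i * pd3 f i x := by
  simpa [pd3] using clm_apply_eq_sum (fderiv ℝ f x) v

lemma opnorm_fderiv_le {f : E3 → ℝ} {c : ℝ} (x : E3)
    (hb : ∀ i, |pd3 f i x| ≤ c) (hc : 0 ≤ c) : ‖fderiv ℝ f x‖ ≤ 3 * c := by
  refine ContinuousLinearMap.opNorm_le_bound _ (by positivity) fun v => ?_
  rw [Real.norm_eq_abs, fderiv_apply_eq]
  calc |∑ i : Fin 3, v i * pd3 f i x| ≤ ∑ i : Fin 3, |v i * pd3 f i x| :=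
        Finset.abs_sum_le_sum_abs _ _
    _ ≤ ∑ _i : Fin 3, ‖v‖ * c := Finset.sum_le_sum fun i _ => by
        rw [abs_mul]
        exact mul_le_mul (abs_coord_le_norm v i) (hb i) (abs_nonneg _) (norm_nonneg _)
    _ = 3 * c * ‖v‖ := by simp [Finset.sum_const]; ring

lemma sum3 {i j k : Fin 3} (hij : i ≠ j) (hjk : j ≠ k) (hik : i ≠ k) (F : Fin 3 → ℝ) :
    ∑ l : Fin 3, F l = F i + F j + F k := by
  fin_cases i <;> fin_cases j <;> fin_cases k <;>
    simp_all [Fin.sum_univ_three] <;> ring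

lemma tt_rpow {t : ℝ} (ht : 0 < t) (c : ℝ) : t * t * t ^ c = t ^ (2 + c) := by
  rw [show (2:ℝ) + c = 1 + (1 + c) by ring, Real.rpow_add ht, Real.rpow_add ht, Real.rpow_one]
  ring

lemma t_rpow {t : ℝ} (ht : 0 < t) (c : ℝ) : t * t ^ c = t ^ (1 + c) := by
  rw [Real.rpow_add ht, Real.rpow_one]

lemma norm_smul_pos {t : ℝ} (ht : 0 < t) (x : E3) : ‖t • x‖ = t * ‖x‖ := by
  rw [norm_smul, Real.norm_eq_abs, abs_of_pos ht]


set_option synthInstance.maxHeartbeats 1000000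
set_option maxHeartbeats 1000000

/-- decay hypotheses -/
structure Decay (a C₀ : ℝ) (f : E3 → ℝ) : Prop where
  smooth : ContDiff ℝ 1 f
  h0 : ∀ x : E3, 1 ≤ ‖x‖ → |f x| ≤ C₀ * ‖x‖ ^ (-a)
  h1 : ∀ x : E3, 1 ≤ ‖x‖ → ∀ i : Fin 3, |pd3 f i x| ≤ C₀ * ‖x‖ ^ (-a - 1)

noncomputable def Phi (f : E3 → ℝ) (j : Fin 3) (X : E3) : ℝ :=
  ∫ t in Ioi (1:ℝ), t * f (t • X) * X j

noncomputable def phiD (f : E3 → ℝ) (j : Fin 3) (x : E3) (t : ℝ) : E3 →L[ℝ] ℝ :=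
  (t * f (t • x)) • (EuclideanSpace.proj j : E3 →L[ℝ] ℝ)
    + x j • ((t * t) • fderiv ℝ f (t • x))

noncomputable def PhiD (f : E3 → ℝ) (j : Fin 3) (x : E3) : E3 →L[ℝ] ℝ :=
  ∫ t in Ioi (1:ℝ), phiD f j x t

/-- generic integrability from an `r^p` bound, `p < -1`. -/
lemma integrable_of_rpow_bound {F : Type*} [NormedAddCommGroup F]
    {g : ℝ → F} (meas : AEStronglyMeasurable g (volume.restrict (Ioi 1)))
    {K p : ℝ} (hp : p < -1) (hg : ∀ t ∈ Ioi (1:ℝ), ‖g t‖ ≤ K * t ^ p) :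
    IntegrableOn g (Ioi 1) := by
  have hb : IntegrableOn (fun t : ℝ => K * t ^ p) (Ioi 1) :=
    (integrableOn_Ioi_rpow_of_lt hp zero_lt_one).const_mul K
  exact Integrable.mono' hb meas ((ae_restrict_iff' measurableSet_Ioi).2 (ae_of_all _ hg))


variable {a C₀ : ℝ} {f : E3 → ℝ}

lemma Decay.fderiv_le (hd : Decay a C₀ f) (hC₀ : 0 ≤ C₀) (x : E3) (hx : 1 ≤ ‖x‖) :
    ‖fderiv ℝ f x‖ ≤ 3 * (C₀ * ‖x‖ ^ (-a - 1)) := by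
  refine opnorm_fderiv_le x (hd.h1 x hx) ?_
  positivity

lemma cont_line (hd : Decay a C₀ f) (x : E3) : Continuous fun t : ℝ => f (t • x) :=
  hd.smooth.continuous.comp (continuous_id.smul continuous_const)

lemma cont_fderiv_line (hd : Decay a C₀ f) (x : E3) :
    Continuous fun t : ℝ => fderiv ℝ f (t • x) :=
  (hd.smooth.continuous_fderiv one_ne_zero).comp (continuous_id.smul continuous_const)

lemma cont_phiD_t (hd : Decay a C₀ f) (j : Fin 3) (x : E3) :
    Continuous fun t : ℝ => phiD f j x t := by
  unfold phiD
  exact ((continuous_id.mul (cont_line hd x)).smul continuous_const).add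
    (continuous_const.fun_smul ((continuous_id.fun_mul continuous_id).fun_smul (cont_fderiv_line hd x)))

/-- pointwise bound for `phiD` on a shell `r ≤ ‖x‖ ≤ R`. -/
lemma phiD_norm_le (hd : Decay a C₀ f) (ha : 2 < a) (hC₀ : 0 ≤ C₀)
    (j : Fin 3) {x : E3} {t r R : ℝ} (ht : t ∈ Ioi (1:ℝ))
    (hr : 1 ≤ r) (hxr : r ≤ ‖x‖) (hxR : ‖x‖ ≤ R) :
    ‖phiD f j x t‖ ≤ (C₀ * r ^ (-a) + 3 * (C₀ * r ^ (-a - 1)) * R) * t ^ (1 - a) := by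
  have ht1 : (1:ℝ) ≤ t := le_of_lt ht
  have ht0 : (0:ℝ) < t := lt_trans zero_lt_one ht
  have hr0 : (0:ℝ) < r := lt_of_lt_of_le zero_lt_one hr
  have hx1 : (1:ℝ) ≤ ‖x‖ := hr.trans hxr
  have hnorm_tx : ‖t • x‖ = t * ‖x‖ := norm_smul_pos ht0 x
  have htx : (1:ℝ) ≤ ‖t • x‖ := by rw [hnorm_tx]; nlinarith
  have key : ∀ c : ℝ, c ≤ 0 → ‖t • x‖ ^ c ≤ t ^ c * r ^ c := by
    intro c hc
    rw [hnorm_tx, Real.mul_rpow ht0.le (by positivity)]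
    exact mul_le_mul_of_nonneg_left (Real.rpow_le_rpow_of_nonpos hr0 hxr hc)
      (Real.rpow_nonneg ht0.le _)
  have h1 : ‖(t * f (t • x)) • (EuclideanSpace.proj j : E3 →L[ℝ] ℝ)‖
      ≤ C₀ * r ^ (-a) * t ^ (1 - a) := by
    refine (norm_smul_le (t * f (t • x)) (EuclideanSpace.proj j : E3 →L[ℝ] ℝ)).trans ?_
    rw [Real.norm_eq_abs, abs_mul, abs_of_pos ht0]
    have hf := hd.h0 _ htx
    have hk := key (-a) (by linarith)
    calc t * |f (t • x)| * ‖(EuclideanSpace.proj j : E3 →L[ℝ] ℝ)‖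
        ≤ t * (C₀ * (t ^ (-a) * r ^ (-a))) * 1 := by
          apply mul_le_mul _ (norm_proj_le j) (norm_nonneg _) (by positivity)
          apply mul_le_mul_of_nonneg_left _ ht0.le
          exact hf.trans (mul_le_mul_of_nonneg_left hk hC₀)
      _ = C₀ * r ^ (-a) * (t * t ^ (-a)) := by ring
      _ = C₀ * r ^ (-a) * t ^ (1 - a) := by
          rw [t_rpow ht0]; ring_nf
  have h2 : ‖x j • ((t * t) • fderiv ℝ f (t • x))‖
      ≤ 3 * (C₀ * r ^ (-a - 1)) * R * t ^ (1 - a) := by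
    refine (norm_smul_le (x j) ((t * t) • fderiv ℝ f (t • x))).trans ?_
    refine le_trans (mul_le_mul_of_nonneg_left
      (norm_smul_le (t * t) (fderiv ℝ f (t • x))) (norm_nonneg _)) ?_
    rw [Real.norm_eq_abs, Real.norm_eq_abs, abs_mul, abs_of_pos ht0]
    have hD : ‖fderiv ℝ f (t • x)‖ ≤ 3 * (C₀ * (t ^ (-a-1) * r ^ (-a-1))) := by
      refine (hd.fderiv_le hC₀ _ htx).trans ?_
      have := key (-a-1) (by linarith)
      nlinarith [Real.rpow_nonneg ht0.le (-a-1), Real.rpow_nonneg hr0.le (-a-1)]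
    have hxj : |x j| ≤ R := (abs_coord_le_norm x j).trans (le_trans hxR le_rfl)
    calc |x j| * (t * t * ‖fderiv ℝ f (t • x)‖)
        ≤ R * (t * t * (3 * (C₀ * (t ^ (-a-1) * r ^ (-a-1))))) := by
          apply mul_le_mul hxj _ (by positivity) ((abs_nonneg _).trans hxj)
          exact mul_le_mul_of_nonneg_left hD (by positivity)
      _ = 3 * (C₀ * r ^ (-a - 1)) * R * (t * t * t ^ (-a-1)) := by ring
      _ = 3 * (C₀ * r ^ (-a - 1)) * R * t ^ (1 - a) := by
          rw [tt_rpow ht0]; ring_nf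
  calc ‖phiD f j x t‖ ≤ _ + _ := norm_add_le _ _
    _ ≤ C₀ * r ^ (-a) * t ^ (1 - a) + 3 * (C₀ * r ^ (-a - 1)) * R * t ^ (1 - a) :=
        add_le_add h1 h2
    _ = (C₀ * r ^ (-a) + 3 * (C₀ * r ^ (-a - 1)) * R) * t ^ (1 - a) := by ring

lemma integrable_phiD (hd : Decay a C₀ f) (ha : 2 < a) (hC₀ : 0 ≤ C₀)
    {x : E3} (j : Fin 3) (hx : 1 ≤ ‖x‖) :
    IntegrableOn (fun t => phiD f j x t) (Ioi (1:ℝ)) := by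
  refine integrable_of_rpow_bound (cont_phiD_t hd j x).aestronglyMeasurable
    (K := C₀ * ‖x‖ ^ (-a) + 3 * (C₀ * ‖x‖ ^ (-a - 1)) * ‖x‖)
    (p := 1 - a) (by linarith) fun t ht => ?_
  exact phiD_norm_le hd ha hC₀ j ht hx le_rfl le_rfl

lemma integrand_hasFDerivAt (hd : Decay a C₀ f) (j : Fin 3) (t : ℝ) (x : E3) :
    HasFDerivAt (fun y : E3 => t * f (t • y) * y j) (phiD f j x t) x := by
  have h1 : HasFDerivAt (fun y : E3 => t • y)
      (t • ContinuousLinearMap.id ℝ (EuclideanSpace ℝ (Fin 3))) x :=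
    (hasFDerivAt_id x).const_smul t
  have h2 : HasFDerivAt f (fderiv ℝ f (t • x)) (t • x) :=
    (hd.smooth.differentiable one_ne_zero (t • x)).hasFDerivAt
  have h3 := h2.comp x h1
  have h4 := h3.const_mul t
  have h5 : HasFDerivAt (fun y : E3 => y j) (EuclideanSpace.proj j : E3 →L[ℝ] ℝ) x :=
    (EuclideanSpace.proj j : E3 →L[ℝ] ℝ).hasFDerivAt
  have h6 := h4.mul h5
  have heq : phiD f j x t = (t * f (t • x)) • (EuclideanSpace.proj j : E3 →L[ℝ] ℝ)
      + x j • (t • ((fderiv ℝ f (t • x)).comp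
        (t • ContinuousLinearMap.id ℝ (EuclideanSpace ℝ (Fin 3))))) := by
    unfold phiD
    congr 1
    ext v
    simp only [ContinuousLinearMap.smul_apply, ContinuousLinearMap.coe_smul', Pi.smul_apply,
      ContinuousLinearMap.coe_comp', Function.comp_apply, ContinuousLinearMap.coe_id', id_eq,
      _root_.map_smul, smul_eq_mul]
    ring
  rw [heq]
  exact h6

lemma hasFDerivAt_Phi (hd : Decay a C₀ f) (ha : 2 < a) (hC₀ : 0 ≤ C₀)
    (j : Fin 3) {x₀ : E3} (hx₀ : 1 < ‖x₀‖) :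
    HasFDerivAt (Phi f j) (PhiD f j x₀) x₀ := by
  set ε := (‖x₀‖ - 1) / 2 with hε
  set r := (‖x₀‖ + 1) / 2 with hrdef
  set R := ‖x₀‖ + ε with hRdef
  have hε0 : 0 < ε := by simp only [hε]; linarith
  have hr1 : 1 ≤ r := by simp only [hrdef]; linarith
  have hball : ∀ x ∈ Metric.ball x₀ ε, r ≤ ‖x‖ ∧ ‖x‖ ≤ R := by
    intro x hx
    rw [Metric.mem_ball, dist_eq_norm] at hx
    have h1 := abs_le.mp (abs_norm_sub_norm_le x x₀)
    constructor
    · simp only [hrdef]; linarith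
    · simp only [hRdef, hε]; linarith
  have key := hasFDerivAt_integral_of_dominated_of_fderiv_le
    (F := fun (x : E3) t => t * f (t • x) * x j)
    (F' := fun (x : E3) t => phiD f j x t)
    (x₀ := x₀) (μ := volume.restrict (Ioi (1:ℝ)))
    (bound := fun t => (C₀ * r ^ (-a) + 3 * (C₀ * r ^ (-a - 1)) * R) * t ^ (1 - a))
    (Metric.ball_mem_nhds x₀ hε0) ?_ ?_ ?_ ?_ ?_ ?_
  · exact key
  · -- measurability of F x for x near x₀
    refine Filter.Eventually.of_forall fun x => ?_
    exact ((continuous_id.mul (cont_line hd x)).mul continuous_const).aestronglyMeasurable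
  · -- integrability of F x₀
    refine integrable_of_rpow_bound
      ((continuous_id.mul (cont_line hd x₀)).mul continuous_const).aestronglyMeasurable
      (K := C₀ * ‖x₀‖ ^ (-a) * ‖x₀‖) (p := 1 - a) (by linarith) fun t ht => ?_
    have ht0 : (0:ℝ) < t := lt_trans zero_lt_one ht
    have htx : (1:ℝ) ≤ ‖t • x₀‖ := by
      rw [norm_smul_pos ht0]
      nlinarith [le_of_lt (mem_Ioi.mp ht), le_of_lt hx₀]
    have hf := hd.h0 _ htx
    have hk : ‖t • x₀‖ ^ (-a) ≤ t ^ (-a) * ‖x₀‖ ^ (-a) := by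
      rw [norm_smul_pos ht0, Real.mul_rpow ht0.le (by positivity)]
    rw [Real.norm_eq_abs, abs_mul, abs_mul, abs_of_pos ht0]
    calc t * |f (t • x₀)| * |x₀ j|
        ≤ t * (C₀ * (t ^ (-a) * ‖x₀‖ ^ (-a))) * ‖x₀‖ := by
          apply mul_le_mul _ (abs_coord_le_norm x₀ j) (abs_nonneg _) (by positivity)
          exact mul_le_mul_of_nonneg_left (hf.trans (mul_le_mul_of_nonneg_left hk hC₀)) ht0.le
      _ = C₀ * ‖x₀‖ ^ (-a) * ‖x₀‖ * (t * t ^ (-a)) := by ring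
      _ = C₀ * ‖x₀‖ ^ (-a) * ‖x₀‖ * t ^ (1 - a) := by rw [t_rpow ht0]; ring_nf
  · exact (cont_phiD_t hd j x₀).aestronglyMeasurable
  · -- bound
    refine (ae_restrict_iff' measurableSet_Ioi).2 (ae_of_all _ fun t ht => ?_)
    intro x hx
    obtain ⟨hr, hR⟩ := hball x hx
    exact phiD_norm_le hd ha hC₀ j ht hr1 hr hR
  · -- integrability of bound
    exact (integrableOn_Ioi_rpow_of_lt (by linarith) zero_lt_one).const_mul _
  · -- differentiability
    refine (ae_restrict_iff' measurableSet_Ioi).2 (ae_of_all _ fun t _ => ?_)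
    intro x _
    exact integrand_hasFDerivAt hd j t x

lemma continuousAt_PhiD (hd : Decay a C₀ f) (ha : 2 < a) (hC₀ : 0 ≤ C₀)
    (j : Fin 3) {x₀ : E3} (hx₀ : 1 < ‖x₀‖) :
    ContinuousAt (PhiD f j) x₀ := by
  set ε := (‖x₀‖ - 1) / 2 with hε
  set r := (‖x₀‖ + 1) / 2 with hrdef
  set R := ‖x₀‖ + ε with hRdef
  have hε0 : 0 < ε := by simp only [hε]; linarith
  have hr1 : 1 ≤ r := by simp only [hrdef]; linarith
  have hball : ∀ x ∈ Metric.ball x₀ ε, r ≤ ‖x‖ ∧ ‖x‖ ≤ R := by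
    intro x hx
    rw [Metric.mem_ball, dist_eq_norm] at hx
    have h1 := abs_le.mp (abs_norm_sub_norm_le x x₀)
    constructor
    · simp only [hrdef]; linarith
    · simp only [hRdef, hε]; linarith
  refine continuousAt_of_dominated (F := fun x t => phiD f j x t)
    (bound := fun t => (C₀ * r ^ (-a) + 3 * (C₀ * r ^ (-a - 1)) * R) * t ^ (1 - a)) ?_ ?_ ?_ ?_
  · exact Filter.Eventually.of_forall fun x => (cont_phiD_t hd j x).aestronglyMeasurable
  · refine Filter.eventually_iff_exists_mem.2 ⟨Metric.ball x₀ ε, Metric.ball_mem_nhds _ hε0, ?_⟩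
    intro x hx
    refine (ae_restrict_iff' measurableSet_Ioi).2 (ae_of_all _ fun t ht => ?_)
    obtain ⟨h1, h2⟩ := hball x hx
    exact phiD_norm_le hd ha hC₀ j ht hr1 h1 h2
  · exact (integrableOn_Ioi_rpow_of_lt (by linarith) zero_lt_one).const_mul _
  · refine ae_of_all _ fun t => ?_
    unfold phiD
    have hc1 : Continuous fun x : E3 => f (t • x) :=
      hd.smooth.continuous.comp (continuous_const_smul t)
    have hc2 : Continuous fun x : E3 => fderiv ℝ f (t • x) :=
      (hd.smooth.continuous_fderiv one_ne_zero).comp (continuous_const_smul t)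
    have hc3 : Continuous fun x : E3 => x j := (EuclideanSpace.proj j : E3 →L[ℝ] ℝ).continuous
    exact (((continuous_const.fun_mul hc1).fun_smul continuous_const).fun_add
      (hc3.fun_smul (continuous_const.fun_smul hc2))).continuousAt

lemma contDiffOn_Phi (hd : Decay a C₀ f) (ha : 2 < a) (hC₀ : 0 ≤ C₀) (j : Fin 3) :
    ContDiffOn ℝ 1 (Phi f j) {x : E3 | 1 < ‖x‖} := by
  have hopen : IsOpen {x : E3 | 1 < ‖x‖} := isOpen_lt continuous_const continuous_norm
  intro x hx
  apply ContDiffAt.contDiffWithinAt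
  rw [contDiffAt_one_iff]
  refine ⟨PhiD f j, {x : E3 | 1 < ‖x‖}, hopen.mem_nhds hx, ?_, ?_⟩
  · exact fun y hy => (continuousAt_PhiD hd ha hC₀ j hy).continuousWithinAt
  · exact fun y hy => hasFDerivAt_Phi hd ha hC₀ j hy

lemma pd3_Phi (hd : Decay a C₀ f) (ha : 2 < a) (hC₀ : 0 ≤ C₀) (j i : Fin 3)
    {x : E3} (hx : 1 < ‖x‖) :
    pd3 (Phi f j) i x = ∫ t in Ioi (1:ℝ),
      (t * f (t • x) * (EuclideanSpace.single i (1:ℝ) j)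
        + x j * ((t * t) * pd3 f i (t • x))) := by
  rw [pd3, (hasFDerivAt_Phi hd ha hC₀ j hx).fderiv]
  rw [PhiD, ContinuousLinearMap.integral_apply (integrable_phiD hd ha hC₀ j hx.le)]
  rfl

lemma cont_pd3_line (hd : Decay a C₀ f) (l : Fin 3) (x : E3) :
    Continuous fun t : ℝ => pd3 f l (t • x) :=
  (ContinuousLinearMap.apply ℝ ℝ (EuclideanSpace.single l (1:ℝ))).continuous.comp
    (cont_fderiv_line hd x)

lemma smul_norm_rpow_le {t : ℝ} (ht : t ∈ Ioi (1:ℝ)) {x : E3} (hx : 1 ≤ ‖x‖) (c : ℝ)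
    (hc : c ≤ 0) : ‖t • x‖ ^ c ≤ t ^ c * ‖x‖ ^ c := by
  have ht0 : (0:ℝ) < t := lt_trans zero_lt_one ht
  rw [norm_smul_pos ht0, Real.mul_rpow ht0.le (by positivity)]

lemma one_le_norm_smul {t : ℝ} (ht : t ∈ Ioi (1:ℝ)) {x : E3} (hx : 1 ≤ ‖x‖) :
    1 ≤ ‖t • x‖ := by
  have ht0 : (0:ℝ) < t := lt_trans zero_lt_one ht
  rw [norm_smul_pos ht0]
  nlinarith [le_of_lt (mem_Ioi.mp ht)]

/-- integrability of `t ↦ x j * (t² · ∂ₗf(tx))` -/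
lemma integrable_T1 (hd : Decay a C₀ f) (ha : 2 < a) (hC₀ : 0 ≤ C₀)
    {x : E3} (l j : Fin 3) (hx : 1 ≤ ‖x‖) :
    IntegrableOn (fun t : ℝ => x j * ((t * t) * pd3 f l (t • x))) (Ioi 1) := by
  refine integrable_of_rpow_bound
    ((continuous_const.mul ((continuous_id.mul continuous_id).mul
      (cont_pd3_line hd l x))).aestronglyMeasurable)
    (K := ‖x‖ * (C₀ * ‖x‖ ^ (-a - 1))) (p := 1 - a) (by linarith) fun t ht => ?_
  have ht0 : (0:ℝ) < t := lt_trans zero_lt_one ht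
  have hpd := hd.h1 _ (one_le_norm_smul ht hx) l
  have hk := smul_norm_rpow_le ht hx (-a-1) (by linarith)
  rw [Real.norm_eq_abs, abs_mul, abs_mul]
  calc |x j| * (|t * t| * |pd3 f l (t • x)|)
      ≤ ‖x‖ * ((t * t) * (C₀ * (t ^ (-a-1) * ‖x‖ ^ (-a-1)))) := by
        apply mul_le_mul (abs_coord_le_norm x j) _ (by positivity) (norm_nonneg _)
        rw [abs_mul, abs_of_pos ht0]
        apply mul_le_mul_of_nonneg_left _ (by positivity)
        exact hpd.trans (mul_le_mul_of_nonneg_left hk hC₀)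
    _ = ‖x‖ * (C₀ * ‖x‖ ^ (-a - 1)) * (t * t * t ^ (-a-1)) := by ring
    _ = ‖x‖ * (C₀ * ‖x‖ ^ (-a - 1)) * t ^ (1 - a) := by rw [tt_rpow ht0]; ring_nf

/-- integrability of `t ↦ t f(tx)` -/
lemma integrable_T2 (hd : Decay a C₀ f) (ha : 2 < a) (hC₀ : 0 ≤ C₀)
    {x : E3} (hx : 1 ≤ ‖x‖) :
    IntegrableOn (fun t : ℝ => t * f (t • x)) (Ioi 1) := by
  refine integrable_of_rpow_bound (continuous_id.mul (cont_line hd x)).aestronglyMeasurable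
    (K := C₀ * ‖x‖ ^ (-a)) (p := 1 - a) (by linarith) fun t ht => ?_
  have ht0 : (0:ℝ) < t := lt_trans zero_lt_one ht
  have hf := hd.h0 _ (one_le_norm_smul ht hx)
  have hk := smul_norm_rpow_le ht hx (-a) (by linarith)
  rw [Real.norm_eq_abs, abs_mul, abs_of_pos ht0]
  calc t * |f (t • x)| ≤ t * (C₀ * (t ^ (-a) * ‖x‖ ^ (-a))) := by
        apply mul_le_mul_of_nonneg_left _ ht0.le
        exact hf.trans (mul_le_mul_of_nonneg_left hk hC₀)
    _ = C₀ * ‖x‖ ^ (-a) * (t * t ^ (-a)) := by ring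
    _ = C₀ * ‖x‖ ^ (-a) * t ^ (1 - a) := by rw [t_rpow ht0]; ring_nf

/-- integrability of the FTC integrand -/
lemma integrable_D (hd : Decay a C₀ f) (ha : 2 < a) (hC₀ : 0 ≤ C₀)
    {x : E3} (hx : 1 ≤ ‖x‖) :
    IntegrableOn (fun t : ℝ => (t + t) * f (t • x)
      + (t * t) * (fderiv ℝ f (t • x) x)) (Ioi 1) := by
  have hmeas : Continuous fun t : ℝ => (t + t) * f (t • x)
      + (t * t) * (fderiv ℝ f (t • x) x) := by
    refine ((continuous_id.add continuous_id).mul (cont_line hd x)).add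
      ((continuous_id.mul continuous_id).mul ?_)
    exact (ContinuousLinearMap.apply ℝ ℝ x).continuous.comp (cont_fderiv_line hd x)
  refine integrable_of_rpow_bound hmeas.aestronglyMeasurable
    (K := 2 * (C₀ * ‖x‖ ^ (-a)) + 3 * (C₀ * ‖x‖ ^ (-a - 1)) * ‖x‖)
    (p := 1 - a) (by linarith) fun t ht => ?_
  have ht0 : (0:ℝ) < t := lt_trans zero_lt_one ht
  have htx := one_le_norm_smul ht hx
  have hf := hd.h0 _ htx
  have hka := smul_norm_rpow_le ht hx (-a) (by linarith)
  have hka1 := smul_norm_rpow_le ht hx (-a-1) (by linarith)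
  have h1 : |(t + t) * f (t • x)| ≤ 2 * (C₀ * ‖x‖ ^ (-a)) * t ^ (1 - a) := by
    rw [abs_mul, abs_of_pos (by linarith)]
    calc (t + t) * |f (t • x)| ≤ (t + t) * (C₀ * (t ^ (-a) * ‖x‖ ^ (-a))) := by
          apply mul_le_mul_of_nonneg_left _ (by linarith)
          exact hf.trans (mul_le_mul_of_nonneg_left hka hC₀)
      _ = 2 * (C₀ * ‖x‖ ^ (-a)) * (t * t ^ (-a)) := by ring
      _ = 2 * (C₀ * ‖x‖ ^ (-a)) * t ^ (1 - a) := by rw [t_rpow ht0]; ring_nf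
  have h2 : |(t * t) * (fderiv ℝ f (t • x) x)| ≤ 3 * (C₀ * ‖x‖ ^ (-a-1)) * ‖x‖ * t ^ (1 - a) := by
    rw [abs_mul, abs_mul, abs_of_pos ht0]
    have hDv : |fderiv ℝ f (t • x) x| ≤ 3 * (C₀ * ‖t • x‖ ^ (-a - 1)) * ‖x‖ := by
      have := (hd.fderiv_le hC₀ _ htx)
      calc |fderiv ℝ f (t • x) x| ≤ ‖fderiv ℝ f (t • x)‖ * ‖x‖ :=
            (fderiv ℝ f (t • x)).le_opNorm x
        _ ≤ 3 * (C₀ * ‖t • x‖ ^ (-a - 1)) * ‖x‖ :=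
            mul_le_mul_of_nonneg_right this (norm_nonneg _)
    calc t * t * |fderiv ℝ f (t • x) x|
        ≤ t * t * (3 * (C₀ * (t ^ (-a-1) * ‖x‖ ^ (-a-1))) * ‖x‖) := by
          apply mul_le_mul_of_nonneg_left _ (by positivity)
          refine hDv.trans ?_
          have : C₀ * ‖t • x‖ ^ (-a - 1) ≤ C₀ * (t ^ (-a-1) * ‖x‖ ^ (-a-1)) :=
            mul_le_mul_of_nonneg_left hka1 hC₀
          nlinarith [norm_nonneg x, Real.rpow_nonneg (norm_nonneg (t • x)) (-a-1), hC₀]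
      _ = 3 * (C₀ * ‖x‖ ^ (-a-1)) * ‖x‖ * (t * t * t ^ (-a-1)) := by ring
      _ = 3 * (C₀ * ‖x‖ ^ (-a-1)) * ‖x‖ * t ^ (1 - a) := by rw [tt_rpow ht0]; ring_nf
  calc ‖(t + t) * f (t • x) + (t * t) * (fderiv ℝ f (t • x) x)‖
      ≤ |(t + t) * f (t • x)| + |(t * t) * (fderiv ℝ f (t • x) x)| := abs_add_le _ _
    _ ≤ 2 * (C₀ * ‖x‖ ^ (-a)) * t ^ (1 - a) + 3 * (C₀ * ‖x‖ ^ (-a-1)) * ‖x‖ * t ^ (1 - a) :=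
        add_le_add h1 h2
    _ = (2 * (C₀ * ‖x‖ ^ (-a)) + 3 * (C₀ * ‖x‖ ^ (-a - 1)) * ‖x‖) * t ^ (1 - a) := by ring

/-- FTC along rays -/
lemma ftc_line (hd : Decay a C₀ f) (ha : 2 < a) (hC₀ : 0 ≤ C₀) {x : E3} (hx : 1 ≤ ‖x‖) :
    ∫ t in Ioi (1:ℝ), ((t + t) * f (t • x) + (t * t) * (fderiv ℝ f (t • x) x)) = - f x := by
  have hder : ∀ t ∈ Ici (1:ℝ), HasDerivAt (fun s : ℝ => s * s * f (s • x))
      ((t + t) * f (t • x) + (t * t) * (fderiv ℝ f (t • x) x)) t := by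
    intro t _
    have h1 : HasDerivAt (fun s : ℝ => s • x) x t := by
      simpa using (hasDerivAt_id t).smul_const x
    have h2 : HasDerivAt (fun s : ℝ => f (s • x)) (fderiv ℝ f (t • x) x) t := by
      have := ((hd.smooth.differentiable one_ne_zero (t • x)).hasFDerivAt).comp_hasDerivAt t h1
      exact this
    have h3 : HasDerivAt (fun s : ℝ => s * s) (t + t) t := by
      simpa using (hasDerivAt_id' t).fun_mul (hasDerivAt_id' t)
    exact h3.mul h2
  have htend : Filter.Tendsto (fun t : ℝ => t * t * f (t • x)) Filter.atTop (𝓝 0) := by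
    apply squeeze_zero_norm' (a := fun t : ℝ => (C₀ * ‖x‖ ^ (-a)) * t ^ (2 - a))
    · filter_upwards [Filter.eventually_gt_atTop (1:ℝ)] with t ht
      have ht0 : (0:ℝ) < t := lt_trans zero_lt_one ht
      have hf := hd.h0 _ (one_le_norm_smul ht hx)
      have hka := smul_norm_rpow_le ht hx (-a) (by linarith)
      rw [Real.norm_eq_abs, abs_mul, abs_mul, abs_of_pos ht0]
      calc t * t * |f (t • x)| ≤ t * t * (C₀ * (t ^ (-a) * ‖x‖ ^ (-a))) := by
            apply mul_le_mul_of_nonneg_left _ (by positivity)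
            exact hf.trans (mul_le_mul_of_nonneg_left hka hC₀)
        _ = (C₀ * ‖x‖ ^ (-a)) * (t * t * t ^ (-a)) := by ring
        _ = (C₀ * ‖x‖ ^ (-a)) * t ^ (2 - a) := by rw [tt_rpow ht0]; ring_nf
    · have h0 : Filter.Tendsto (fun t : ℝ => (C₀ * ‖x‖ ^ (-a)) * t ^ (-(a - 2)))
          Filter.atTop (𝓝 ((C₀ * ‖x‖ ^ (-a)) * 0)) :=
        (tendsto_rpow_neg_atTop (by linarith)).const_mul _
      rw [mul_zero] at h0
      refine h0.congr fun t => ?_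
      congr 1
      ring_nf
  have := integral_Ioi_of_hasDerivAt_of_tendsto'
    (fun t ht => hder t ht) (integrable_D hd ha hC₀ hx) htend
  rw [this]
  norm_num

lemma err_integral {m C₁ : ℝ} (hm : 0 < m) (hC₁ : 0 ≤ C₁)
    {u : ℝ → ℝ} (hmeas : AEStronglyMeasurable u (volume.restrict (Ioi 1)))
    {x : E3} (hx : 1 ≤ ‖x‖)
    (hb : ∀ t ∈ Ioi (1:ℝ), |u t| ≤ (C₁ * ‖x‖ ^ (-(m + 2))) * t ^ (-(m + 1))) :
    |∫ t in Ioi (1:ℝ), u t| ≤ (C₁ / m) * ‖x‖ ^ (-(m + 2)) := by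
  have hbint : IntegrableOn (fun t : ℝ => (C₁ * ‖x‖ ^ (-(m + 2))) * t ^ (-(m + 1))) (Ioi 1) :=
    (integrableOn_Ioi_rpow_of_lt (by linarith) zero_lt_one).const_mul _
  have h1 : |∫ t in Ioi (1:ℝ), u t|
      ≤ ∫ t in Ioi (1:ℝ), (C₁ * ‖x‖ ^ (-(m + 2))) * t ^ (-(m + 1)) := by
    rw [← Real.norm_eq_abs]
    refine norm_integral_le_of_norm_le hbint
      ((ae_restrict_iff' measurableSet_Ioi).2 (ae_of_all _ fun t ht => ?_))
    rw [Real.norm_eq_abs]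
    exact hb t ht
  refine h1.trans ?_
  rw [integral_const_mul, integral_Ioi_rpow_of_lt (by linarith) zero_lt_one]
  rw [Real.one_rpow]
  rw [show -(1:ℝ) / (-(m + 1) + 1) = 1 / m by rw [show -(m + 1) + 1 = -m by ring, div_neg, neg_div, neg_neg]]
  rw [show C₁ * ‖x‖ ^ (-(m + 2)) * (1 / m) = (C₁ / m) * ‖x‖ ^ (-(m + 2)) by ring]

lemma combo {m a C₀ C₁ : ℝ} (hm : 0 < m) (ha : 2 < a) (hC₀ : 0 ≤ C₀) (hC₁ : 0 ≤ C₁)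
    {f g h : E3 → ℝ} (hdf : Decay a C₀ f) (hdg : Decay a C₀ g) (hdh : Decay a C₀ h)
    {i j k : Fin 3} (hij : i ≠ j) (hjk : j ≠ k) (hik : i ≠ k)
    (hdiv : ∀ x : E3, 1 ≤ ‖x‖ → |pd3 f i x + pd3 g j x + pd3 h k x| ≤ C₁ * ‖x‖ ^ (-(m + 3)))
    {x : E3} (hx : 1 < ‖x‖) :
    |(pd3 (fun X => Phi g i X - Phi f j X) j x
        - pd3 (fun X => Phi f k X - Phi h i X) k x) - f x|
      ≤ (C₁ / m) * ‖x‖ ^ (-(m + 2)) := by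
  have hx1 : 1 ≤ ‖x‖ := hx.le
  have hgi := hasFDerivAt_Phi hdg ha hC₀ i hx
  have hfj := hasFDerivAt_Phi hdf ha hC₀ j hx
  have hfk := hasFDerivAt_Phi hdf ha hC₀ k hx
  have hhi := hasFDerivAt_Phi hdh ha hC₀ i hx
  have e1 : pd3 (fun X => Phi g i X - Phi f j X) j x
      = pd3 (Phi g i) j x - pd3 (Phi f j) j x := by
    unfold pd3
    rw [show (fun X => Phi g i X - Phi f j X) = Phi g i - Phi f j from rfl, (hgi.sub hfj).fderiv, hgi.fderiv, hfj.fderiv]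
    rfl
  have e2 : pd3 (fun X => Phi f k X - Phi h i X) k x
      = pd3 (Phi f k) k x - pd3 (Phi h i) k x := by
    unfold pd3
    rw [show (fun X => Phi f k X - Phi h i X) = Phi f k - Phi h i from rfl, (hfk.sub hhi).fderiv, hfk.fderiv, hhi.fderiv]
    rfl
  have hA1 : pd3 (Phi g i) j x = ∫ t in Ioi (1:ℝ), x i * ((t * t) * pd3 g j (t • x)) := by
    rw [pd3_Phi hdg ha hC₀ i j hx]
    congr 1
    funext t
    simp [EuclideanSpace.single_apply, hij]
  have hA2 : pd3 (Phi f j) j x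
      = ∫ t in Ioi (1:ℝ), (t * f (t • x) + x j * ((t * t) * pd3 f j (t • x))) := by
    rw [pd3_Phi hdf ha hC₀ j j hx]
    congr 1
    funext t
    simp [EuclideanSpace.single_apply]
  have hA3 : pd3 (Phi f k) k x
      = ∫ t in Ioi (1:ℝ), (t * f (t • x) + x k * ((t * t) * pd3 f k (t • x))) := by
    rw [pd3_Phi hdf ha hC₀ k k hx]
    congr 1
    funext t
    simp [EuclideanSpace.single_apply]
  have hA4 : pd3 (Phi h i) k x = ∫ t in Ioi (1:ℝ), x i * ((t * t) * pd3 h k (t • x)) := by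
    rw [pd3_Phi hdh ha hC₀ i k hx]
    congr 1
    funext t
    simp [EuclideanSpace.single_apply, hik]
  -- integrability
  have hDint := integrable_D hdf ha hC₀ hx1
  have hI1 := integrable_T1 hdg ha hC₀ j i hx1
  have hI2b := integrable_T1 hdf ha hC₀ j j hx1
  have hI3b := integrable_T1 hdf ha hC₀ k k hx1
  have hI4 := integrable_T1 hdh ha hC₀ k i hx1
  have hT2 := integrable_T2 hdf ha hC₀ hx1
  have herrInt : IntegrableOn (fun t : ℝ =>
      x i * ((t * t) * (pd3 f i (t • x) + pd3 g j (t • x) + pd3 h k (t • x)))) (Ioi 1) := by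
    have heq : (fun t : ℝ =>
        x i * ((t * t) * (pd3 f i (t • x) + pd3 g j (t • x) + pd3 h k (t • x))))
        = fun t : ℝ => x i * ((t * t) * pd3 f i (t • x))
          + (x i * ((t * t) * pd3 g j (t • x)) + x i * ((t * t) * pd3 h k (t • x))) := by
      funext t
      ring
    rw [heq]
    exact (integrable_T1 hdf ha hC₀ i i hx1).add (hI1.add hI4)
  -- the key integral identity
  have key : (∫ t in Ioi (1:ℝ),
        x i * ((t * t) * (pd3 f i (t • x) + pd3 g j (t • x) + pd3 h k (t • x))))
      - (∫ t in Ioi (1:ℝ), ((t + t) * f (t • x) + (t * t) * (fderiv ℝ f (t • x) x)))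
      = (∫ t in Ioi (1:ℝ), x i * ((t * t) * pd3 g j (t • x)))
        - (∫ t in Ioi (1:ℝ), (t * f (t • x) + x j * ((t * t) * pd3 f j (t • x))))
        - ((∫ t in Ioi (1:ℝ), (t * f (t • x) + x k * ((t * t) * pd3 f k (t • x))))
          - (∫ t in Ioi (1:ℝ), x i * ((t * t) * pd3 h k (t • x)))) := by
    calc (∫ t in Ioi (1:ℝ),
            x i * ((t * t) * (pd3 f i (t • x) + pd3 g j (t • x) + pd3 h k (t • x))))
          - (∫ t in Ioi (1:ℝ), ((t + t) * f (t • x) + (t * t) * (fderiv ℝ f (t • x) x)))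
        = ∫ t in Ioi (1:ℝ),
            (x i * ((t * t) * (pd3 f i (t • x) + pd3 g j (t • x) + pd3 h k (t • x)))
              - ((t + t) * f (t • x) + (t * t) * (fderiv ℝ f (t • x) x))) :=
          (integral_sub herrInt hDint).symm
      _ = ∫ t in Ioi (1:ℝ),
            ((x i * ((t * t) * pd3 g j (t • x))
                - (t * f (t • x) + x j * ((t * t) * pd3 f j (t • x))))
              - ((t * f (t • x) + x k * ((t * t) * pd3 f k (t • x)))
                - x i * ((t * t) * pd3 h k (t • x)))) := by
          refine setIntegral_congr_fun measurableSet_Ioi fun t _ => ?_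
          rw [fderiv_apply_eq f (t • x) x, sum3 hij hjk hik fun l => x l * pd3 f l (t • x)]
          ring
      _ = (∫ t in Ioi (1:ℝ),
            (x i * ((t * t) * pd3 g j (t • x))
              - (t * f (t • x) + x j * ((t * t) * pd3 f j (t • x)))))
          - (∫ t in Ioi (1:ℝ),
            ((t * f (t • x) + x k * ((t * t) * pd3 f k (t • x)))
              - x i * ((t * t) * pd3 h k (t • x)))) :=
          integral_sub (hI1.sub (hT2.add hI2b)) ((hT2.add hI3b).sub hI4)
      _ = ((∫ t in Ioi (1:ℝ), x i * ((t * t) * pd3 g j (t • x)))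
            - (∫ t in Ioi (1:ℝ), (t * f (t • x) + x j * ((t * t) * pd3 f j (t • x)))))
          - ((∫ t in Ioi (1:ℝ), (t * f (t • x) + x k * ((t * t) * pd3 f k (t • x))))
            - (∫ t in Ioi (1:ℝ), x i * ((t * t) * pd3 h k (t • x)))) := by
          rw [show (∫ t in Ioi (1:ℝ),
              (x i * ((t * t) * pd3 g j (t • x))
                - (t * f (t • x) + x j * ((t * t) * pd3 f j (t • x)))))
              = (∫ t in Ioi (1:ℝ), x i * ((t * t) * pd3 g j (t • x)))
                - (∫ t in Ioi (1:ℝ), (t * f (t • x) + x j * ((t * t) * pd3 f j (t • x))))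
              from integral_sub hI1 (hT2.add hI2b),
            show (∫ t in Ioi (1:ℝ),
              ((t * f (t • x) + x k * ((t * t) * pd3 f k (t • x)))
                - x i * ((t * t) * pd3 h k (t • x))))
              = (∫ t in Ioi (1:ℝ), (t * f (t • x) + x k * ((t * t) * pd3 f k (t • x))))
                - (∫ t in Ioi (1:ℝ), x i * ((t * t) * pd3 h k (t • x)))
              from integral_sub (hT2.add hI3b) hI4]
  rw [e1, e2, hA1, hA2, hA3, hA4, ← key, ftc_line hdf ha hC₀ hx1]
  rw [show (∫ t in Ioi (1:ℝ),
        x i * ((t * t) * (pd3 f i (t • x) + pd3 g j (t • x) + pd3 h k (t • x))))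
      - - f x - f x
      = ∫ t in Ioi (1:ℝ),
        x i * ((t * t) * (pd3 f i (t • x) + pd3 g j (t • x) + pd3 h k (t • x))) by ring]
  -- final bound
  have hmeas : Continuous fun t : ℝ =>
      x i * ((t * t) * (pd3 f i (t • x) + pd3 g j (t • x) + pd3 h k (t • x))) :=
    continuous_const.mul ((continuous_id.mul continuous_id).mul
      (((cont_pd3_line hdf i x).add (cont_pd3_line hdg j x)).add (cont_pd3_line hdh k x)))
  refine err_integral hm hC₁ hmeas.aestronglyMeasurable hx1 fun t ht => ?_
  have ht0 : (0:ℝ) < t := lt_trans zero_lt_one ht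
  have hx0 : (0:ℝ) < ‖x‖ := lt_of_lt_of_le zero_lt_one hx1
  have hdv := hdiv (t • x) (one_le_norm_smul ht hx1)
  have hsm : ‖t • x‖ ^ (-(m + 3)) = t ^ (-(m + 3)) * ‖x‖ ^ (-(m + 3)) := by
    rw [norm_smul_pos ht0, Real.mul_rpow ht0.le hx0.le]
  rw [abs_mul, abs_mul]
  calc |x i| * (|t * t| * |pd3 f i (t • x) + pd3 g j (t • x) + pd3 h k (t • x)|)
      ≤ ‖x‖ * ((t * t) * (C₁ * (t ^ (-(m + 3)) * ‖x‖ ^ (-(m + 3))))) := by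
        apply mul_le_mul (abs_coord_le_norm x i) _ (by positivity) (norm_nonneg _)
        rw [abs_mul, abs_of_pos ht0]
        apply mul_le_mul_of_nonneg_left _ (by positivity)
        rw [← hsm]
        exact hdv
    _ = C₁ * (‖x‖ * ‖x‖ ^ (-(m + 3))) * (t * t * t ^ (-(m + 3))) := by ring
    _ = (C₁ * ‖x‖ ^ (-(m + 2))) * t ^ (-(m + 1)) := by
        rw [tt_rpow ht0, t_rpow hx0]
        ring_nf

end APL


open APL in
/-- Approximate Poincaré lemma (quantitative form): if the two-form
`ν = A dy∧dz + B dz∧dx + C dx∧dy` has coefficients decaying like `r^{−a}`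
(`a > 2`), first derivatives decaying like `r^{−a−1}`, and `dν = O(r^{−(m+3)})`,
then there is a one-form `σ = P dx + Q dy + R dz`, of class `C¹` on `{r > 1}`,
with `dσ = ν + O(r^{−(m+2)})`, where the constant in the error term depends only
on `m, a, C₀, C₁`. -/
theorem approximate_poincare_lemma (m a C₀ C₁ : ℝ)
    (hm : 0 < m) (ha : 2 < a) (hC₀ : 0 ≤ C₀) (hC₁ : 0 ≤ C₁) :
    ∃ C₂ : ℝ, 0 ≤ C₂ ∧
      ∀ A B C : EuclideanSpace ℝ (Fin 3) → ℝ,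
        ContDiff ℝ 1 A → ContDiff ℝ 1 B → ContDiff ℝ 1 C →
        (∀ x : EuclideanSpace ℝ (Fin 3), 1 ≤ ‖x‖ →
          |A x| ≤ C₀ * ‖x‖ ^ (-a) ∧ |B x| ≤ C₀ * ‖x‖ ^ (-a) ∧
          |C x| ≤ C₀ * ‖x‖ ^ (-a)) →
        (∀ x : EuclideanSpace ℝ (Fin 3), 1 ≤ ‖x‖ → ∀ i : Fin 3,
          |pd3 A i x| ≤ C₀ * ‖x‖ ^ (-a - 1) ∧ |pd3 B i x| ≤ C₀ * ‖x‖ ^ (-a - 1) ∧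
          |pd3 C i x| ≤ C₀ * ‖x‖ ^ (-a - 1)) →
        (∀ x : EuclideanSpace ℝ (Fin 3), 1 ≤ ‖x‖ →
          |pd3 A 0 x + pd3 B 1 x + pd3 C 2 x| ≤ C₁ * ‖x‖ ^ (-(m + 3))) →
        ∃ P Q R : EuclideanSpace ℝ (Fin 3) → ℝ,
          ContDiffOn ℝ 1 P {x : EuclideanSpace ℝ (Fin 3) | 1 < ‖x‖} ∧
          ContDiffOn ℝ 1 Q {x : EuclideanSpace ℝ (Fin 3) | 1 < ‖x‖} ∧
          ContDiffOn ℝ 1 R {x : EuclideanSpace ℝ (Fin 3) | 1 < ‖x‖} ∧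
          ∀ x : EuclideanSpace ℝ (Fin 3), 1 < ‖x‖ →
            |(pd3 R 1 x - pd3 Q 2 x) - A x| ≤ C₂ * ‖x‖ ^ (-(m + 2)) ∧
            |(pd3 P 2 x - pd3 R 0 x) - B x| ≤ C₂ * ‖x‖ ^ (-(m + 2)) ∧
            |(pd3 Q 0 x - pd3 P 1 x) - C x| ≤ C₂ * ‖x‖ ^ (-(m + 2)) := by
  refine ⟨C₁ / m, div_nonneg hC₁ hm.le, ?_⟩
  intro A B C hA hB hC h0 h1 hdiv
  have hdA : Decay a C₀ A := ⟨hA, fun x hx => (h0 x hx).1, fun x hx i => (h1 x hx i).1⟩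
  have hdB : Decay a C₀ B := ⟨hB, fun x hx => (h0 x hx).2.1, fun x hx i => (h1 x hx i).2.1⟩
  have hdC : Decay a C₀ C := ⟨hC, fun x hx => (h0 x hx).2.2, fun x hx i => (h1 x hx i).2.2⟩
  refine ⟨fun X => Phi C 1 X - Phi B 2 X, fun X => Phi A 2 X - Phi C 0 X,
    fun X => Phi B 0 X - Phi A 1 X, ?_, ?_, ?_, ?_⟩
  · exact (contDiffOn_Phi hdC ha hC₀ 1).sub (contDiffOn_Phi hdB ha hC₀ 2)
  · exact (contDiffOn_Phi hdA ha hC₀ 2).sub (contDiffOn_Phi hdC ha hC₀ 0)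
  · exact (contDiffOn_Phi hdB ha hC₀ 0).sub (contDiffOn_Phi hdA ha hC₀ 1)
  · intro x hx
    refine ⟨?_, ?_, ?_⟩
    · exact combo hm ha hC₀ hC₁ hdA hdB hdC (by decide) (by decide) (by decide) hdiv hx
    · refine combo hm ha hC₀ hC₁ hdB hdC hdA (by decide) (by decide) (by decide) ?_ hx
      intro y hy
      rw [show pd3 B 1 y + pd3 C 2 y + pd3 A 0 y
        = pd3 A 0 y + pd3 B 1 y + pd3 C 2 y by ring]
      exact hdiv y hy
    · refine combo hm ha hC₀ hC₁ hdC hdA hdB (by decide) (by decide) (by decide) ?_ hx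
      intro y hy
      rw [show pd3 C 2 y + pd3 A 0 y + pd3 B 1 y
        = pd3 A 0 y + pd3 B 1 y + pd3 C 2 y by ring]
      exact hdiv y hy
end
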